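/- arXiv:1112.3127 — 3 statements merged into one kernel-verified Lean document; each statement's English description precedes it below -/
import Mathlib

section
/- Let G be a finite group, k a number field regarded as a subfield of ℂ, and M a finite-dimensional k-vector space carrying a linear representation of G. Let φ be an irreducible finite-dimensional complex representation of G such that φ occurs with multiplicity exactly one in the complexification ℂ ⊗_k M (i.e. ⟨χ_φ, χ_{ℂ⊗_k M}⟩ = 1) and such that χ_φ(g) ∈ k for all g ∈ G. Then φ can be realized over k: there exists a representation of G on a finite-dimensional k-vector space W such that ℂ ⊗_k W is isomorphic to φ as a representation of G. -/
open scoped TensorProduct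

/-- The standard inner product of class functions on a finite group. -/
noncomputable def charInner {G : Type*} [Group G] [Fintype G] (χ ψ : G → ℂ) : ℂ :=
  (Fintype.card G : ℂ)⁻¹ * ∑ g : G, χ g * (starRingEnd ℂ) (ψ g)


open Module Finset

lemma conj_of_pow_eq_one {x : ℂ} {n : ℕ} (hn : n ≠ 0) (hx : x ^ n = 1) :
    (starRingEnd ℂ) x = x ^ (n - 1) := by
  have habs : ‖x‖ ^ n = 1 := by
    rw [← norm_pow, hx, norm_one]
  have habs1 : ‖x‖ = 1 := by
    rcases (pow_eq_one_iff_cases).mp habs with h | h | h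
    · omega
    · exact h
    · nlinarith [norm_nonneg x, h.1]
  have h1 : x * (starRingEnd ℂ) x = 1 := by
    rw [Complex.mul_conj, Complex.normSq_eq_norm_sq, habs1]; norm_num
  have h2 : x * x ^ (n - 1) = 1 := by
    rw [← pow_succ' x (n-1), Nat.sub_add_cancel (Nat.one_le_iff_ne_zero.mpr hn), hx]
  have hx0 : x ≠ 0 := fun h => by simp [h] at h1
  exact (eq_inv_of_mul_eq_one_right h1).trans (eq_inv_of_mul_eq_one_right h2).symm

open LinearMap in
lemma trace_pow_sub_one_eq_conj {X : Type} [AddCommGroup X] [Module ℂ X] [FiniteDimensional ℂ X]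
    (A : X →ₗ[ℂ] X) {n : ℕ} (hn : n ≠ 0) (hA : A ^ n = 1) :
    LinearMap.trace ℂ X (A ^ (n - 1)) = (starRingEnd ℂ) (LinearMap.trace ℂ X A) := by
  rcases eq_or_lt_of_le (Nat.one_le_iff_ne_zero.mpr hn) with h1 | h2
  · -- n = 1
    have hA1 : A = 1 := by rw [← pow_one A, h1]; exact hA
    rw [← h1]; simp [hA1, LinearMap.trace_one]
  -- n ≥ 2
  set ζ := Complex.exp (2 * Real.pi * Complex.I / n) with hζdef
  have hζ : IsPrimitiveRoot ζ n := Complex.isPrimitiveRoot_exp n hn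
  have hζn : ζ ^ n = 1 := hζ.pow_eq_one
  have hζ0 : ζ ≠ 0 := fun h => by simp [h, zero_pow hn] at hζn
  set S : ℕ → (X →ₗ[ℂ] X) := fun i => ∑ j ∈ Finset.range n, ((ζ ^ i)⁻¹ ^ j) • A ^ j with hSdef
  set P : ℕ → (X →ₗ[ℂ] X) := fun i => (n : ℂ)⁻¹ • S i with hPdef
  have hn0 : (n : ℂ) ≠ 0 := Nat.cast_ne_zero.mpr hn
  -- idempotency
  have hSS : ∀ i, S i * S i = (n : ℂ) • S i := by
    intro i
    set c := (ζ ^ i)⁻¹ with hcdef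
    have hc : c ^ n = 1 := by
      rw [hcdef, inv_pow, ← pow_mul, mul_comm i n, pow_mul, hζn, one_pow, inv_one]
    set F : ℕ → (X →ₗ[ℂ] X) := fun j => c ^ j • A ^ j with hFdef
    have hF : ∀ a b, F (a + b) = F a * F b := by
      intro a b
      simp only [hFdef, pow_add, smul_mul_smul_comm]
    have hF0 : F 0 = 1 := by simp [hFdef]
    have hFn : F n = F 0 := by simp [hFdef, hc, hA]
    have hshift : ∑ j ∈ Finset.range n, F (j + 1) = ∑ j ∈ Finset.range n, F j := by
      have e1 := Finset.sum_range_succ' F n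
      have e2 := Finset.sum_range_succ F n
      rw [e2, hFn, hF0] at e1
      have := e1.symm
      rwa [add_left_inj] at this
    have hmul : ∀ l, (∑ j ∈ Finset.range n, F j) * F l = ∑ j ∈ Finset.range n, F j := by
      intro l
      induction l with
      | zero => rw [hF0, mul_one]
      | succ m ih =>
        have : F (m + 1) = F m * F 1 := hF m 1
        rw [this, ← mul_assoc, ih, Finset.sum_mul]
        calc ∑ j ∈ Finset.range n, F j * F 1 = ∑ j ∈ Finset.range n, F (j + 1) := by
              refine Finset.sum_congr rfl fun j _ => (hF j 1).symm
          _ = ∑ j ∈ Finset.range n, F j := hshift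
    have : S i = ∑ j ∈ Finset.range n, F j := rfl
    rw [this, Finset.mul_sum]
    calc ∑ l ∈ Finset.range n, (∑ j ∈ Finset.range n, F j) * F l
        = ∑ l ∈ Finset.range n, ∑ j ∈ Finset.range n, F j := Finset.sum_congr rfl fun l _ => hmul l
      _ = (n : ℂ) • ∑ j ∈ Finset.range n, F j := by
          rw [Finset.sum_const, Finset.card_range, Nat.cast_smul_eq_nsmul]
  have hPP : ∀ i, P i * P i = P i := by
    intro i
    rw [hPdef]
    simp only [smul_mul_assoc, mul_smul_comm, hSS i]
    rw [smul_comm, inv_smul_smul₀ hn0]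
  -- trace of P i is a natural number
  have htrP : ∀ i, LinearMap.trace ℂ X (P i) =
      (Module.finrank ℂ (LinearMap.range (P i)) : ℂ) := by
    intro i
    have hproj : LinearMap.IsProj (LinearMap.range (P i)) (P i) := by
      refine ⟨fun x => LinearMap.mem_range_self _ x, fun x hx => ?_⟩
      obtain ⟨y, rfl⟩ := hx
      have := congrArg (fun f => f y) (hPP i)
      simpa [Module.End.mul_apply] using this
    exact hproj.trace
  -- orthogonality: key trace identity
  have horth : ∀ K < n, ∑ i ∈ Finset.range n, (ζ ^ K) ^ i * LinearMap.trace ℂ X (P i)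
      = LinearMap.trace ℂ X (A ^ K) := by
    intro K hK
    have htrPi : ∀ i, LinearMap.trace ℂ X (P i)
        = (n : ℂ)⁻¹ * ∑ j ∈ Finset.range n, ((ζ ^ j)⁻¹) ^ i * LinearMap.trace ℂ X (A ^ j) := by
      intro i
      rw [hPdef]
      simp only [map_smul, hSdef, map_sum, smul_eq_mul]
      congr 1
      refine Finset.sum_congr rfl fun j _ => ?_
      congr 1
      rw [← inv_pow, ← inv_pow, ← pow_mul, ← pow_mul, mul_comm i j]
    calc ∑ i ∈ Finset.range n, (ζ ^ K) ^ i * LinearMap.trace ℂ X (P i)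
        = ∑ i ∈ Finset.range n, ∑ j ∈ Finset.range n,
            (n : ℂ)⁻¹ * ((ζ ^ K * (ζ ^ j)⁻¹) ^ i * LinearMap.trace ℂ X (A ^ j)) := by
          refine Finset.sum_congr rfl fun i _ => ?_
          rw [htrPi i, Finset.mul_sum, Finset.mul_sum]
          refine Finset.sum_congr rfl fun j _ => ?_
          rw [mul_pow]; ring
      _ = ∑ j ∈ Finset.range n, (n : ℂ)⁻¹ *
            ((∑ i ∈ Finset.range n, (ζ ^ K * (ζ ^ j)⁻¹) ^ i) * LinearMap.trace ℂ X (A ^ j)) := by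
          rw [Finset.sum_comm]
          refine Finset.sum_congr rfl fun j _ => ?_
          rw [Finset.sum_mul, Finset.mul_sum]
      _ = LinearMap.trace ℂ X (A ^ K) := by
          rw [Finset.sum_eq_single K]
          · have : ζ ^ K * (ζ ^ K)⁻¹ = 1 := mul_inv_cancel₀ (pow_ne_zero _ hζ0)
            rw [this]
            simp [hn0]
          · intro j hj hjK
            have hx1 : ζ ^ K * (ζ ^ j)⁻¹ ≠ 1 := by
              intro h
              apply hjK
              have : ζ ^ K = ζ ^ j := by
                field_simp at h; exact h
              exact (hζ.pow_inj (Finset.mem_range.mp hj) hK this.symm)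
            have hxn : (ζ ^ K * (ζ ^ j)⁻¹) ^ n = 1 := by
              rw [mul_pow, ← pow_mul, mul_comm K n, pow_mul, hζn, one_pow, inv_pow,
                ← pow_mul, mul_comm j n, pow_mul, hζn, one_pow, inv_one, one_mul]
            rw [geom_sum_eq hx1, hxn]
            simp
          · intro h
            exact absurd (Finset.mem_range.mpr hK) h
  -- conclude
  have h1lt : 1 < n := h2
  have e1 := horth 1 h1lt
  have e2 := horth (n - 1) (by omega)
  simp only [pow_one] at e1
  rw [← e1, ← e2, map_sum]
  refine Finset.sum_congr rfl fun i _ => ?_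
  rw [map_mul, htrP i, ← Complex.ofReal_natCast, Complex.conj_ofReal, Complex.ofReal_natCast]
  congr 1
  rw [conj_of_pow_eq_one hn (by rw [← pow_mul, mul_comm i n, pow_mul, hζn, one_pow]),
    ← pow_mul, ← pow_mul, mul_comm (n-1) i]



open CategoryTheory

lemma invariant_subspace_bot_or_top {G : Type} [Group G] (φ : FDRep ℂ G)
    [Simple φ] (U : Submodule ℂ φ) (hU : ∀ (g : G), ∀ u ∈ U, φ.ρ g u ∈ U) :
    U = ⊥ ∨ U = ⊤ := by
  by_cases hbot : U = ⊥
  · exact Or.inl hbot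
  right
  let ρU : Representation ℂ G U :=
    { toFun := fun g => (φ.ρ g).restrict (hU g)
      map_one' := by
        ext u
        simp [LinearMap.restrict_apply]
      map_mul' := fun g h => by
        ext u
        simp [LinearMap.restrict_apply] }
  let ψ : FDRep ℂ G := FDRep.of ρU
  let ι : ψ ⟶ φ := ⟨(FGModuleCat.ofHom U.subtype : ψ.V ⟶ φ.V), fun g => by ext u; rfl⟩
  have hιval : ∀ u : U, ι.hom u = (u : φ) := fun u => rfl
  have hmono : Mono ι := by
    constructor
    intro Z a b hab
    apply Action.hom_ext
    apply ConcreteCategory.hom_ext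
    intro x
    have := congrArg (fun f : Z ⟶ φ => Action.Hom.hom f x) hab
    simp only [Action.comp_hom] at this
    have h2 : U.subtype (a.hom x) = U.subtype (b.hom x) := this
    exact Subtype.ext h2
  obtain ⟨u, huU, hu0⟩ := Submodule.ne_bot_iff U |>.mp hbot
  have hι0 : ι ≠ 0 := by
    intro h
    apply hu0
    have : ι.hom ⟨u, huU⟩ = (0 : φ) := by rw [h]; rfl
    simpa [hιval] using this
  haveI := hmono
  haveI : IsIso ι := isIso_of_mono_of_nonzero hι0
  rw [Submodule.eq_top_iff']
  intro x
  have hinv := IsIso.inv_hom_id ι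
  have := congrArg (fun f : φ ⟶ φ => Action.Hom.hom f x) hinv
  simp only [Action.comp_hom, Action.id_hom, CategoryTheory.comp_apply, CategoryTheory.id_apply] at this
  have : ι.hom ((CategoryTheory.inv ι).hom x) = x := this
  rw [← this]
  exact ((CategoryTheory.inv ι).hom x).2


open FDRep in
lemma char_inv_eq_conj {G : Type} [Group G] [Fintype G] (φ : FDRep ℂ G) (g : G) :
    φ.character g⁻¹ = (starRingEnd ℂ) (φ.character g) := by
  have hcard : g ^ Fintype.card G = 1 := pow_card_eq_one
  have hA : (φ.ρ g) ^ Fintype.card G = 1 := by rw [← map_pow, hcard, map_one]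
  have hg2 : g ^ (Fintype.card G - 1) * g = 1 := by
    rw [← pow_succ, Nat.sub_add_cancel (Nat.one_le_iff_ne_zero.mpr Fintype.card_ne_zero), hcard]
  have hginv : g⁻¹ = g ^ (Fintype.card G - 1) := (eq_inv_of_mul_eq_one_left hg2).symm
  show LinearMap.trace ℂ φ (φ.ρ g⁻¹) = (starRingEnd ℂ) (LinearMap.trace ℂ φ (φ.ρ g))
  rw [hginv, map_pow]
  exact trace_pow_sub_one_eq_conj (φ.ρ g) Fintype.card_ne_zero hA

/-- Commutation of a conjugation-invariant weighted sum with the representation. -/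
lemma sum_smul_ρ_comm {R G V : Type*} [CommRing R] [Group G] [Fintype G]
    [AddCommGroup V] [Module R V] (ρ : Representation R G V) (c : G → R)
    (hc : ∀ g h : G, c (h * g * h⁻¹) = c g) (h : G) :
    (∑ g : G, c g • (ρ g : V →ₗ[R] V)) * ρ h = ρ h * ∑ g : G, c g • (ρ g : V →ₗ[R] V) := by
  rw [Finset.sum_mul, Finset.mul_sum]
  refine (Fintype.sum_equiv ((Equiv.mulLeft h).trans (Equiv.mulRight h⁻¹)) _ _ fun s => ?_).symm
  simp only [Equiv.trans_apply, Equiv.coe_mulLeft, Equiv.coe_mulRight]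
  rw [hc s h, smul_mul_assoc, mul_smul_comm, ← map_mul, ← map_mul, inv_mul_cancel_right]

/-- Membership in invariants of `linHom` is equivalent to equivariance. -/
lemma mem_linHom_invariants_iff {R G V W : Type*} [CommRing R] [Group G]
    [AddCommGroup V] [Module R V] [AddCommGroup W] [Module R W]
    (ρ1 : Representation R G V) (ρ2 : Representation R G W) (f : V →ₗ[R] W) :
    f ∈ Representation.invariants (Representation.linHom ρ1 ρ2) ↔
      ∀ g : G, f ∘ₗ ρ1 g = ρ2 g ∘ₗ f := by
  rw [Representation.mem_invariants]
  constructor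
  · intro hf g
    have := hf g
    rw [Representation.linHom_apply] at this
    conv_lhs => rw [← this]
    ext x
    simp only [LinearMap.comp_apply]
    congr 1
    congr 1
    rw [← Module.End.mul_apply, ← map_mul, inv_mul_cancel, map_one, Module.End.one_apply]
  · intro hf g
    ext x
    simp only [Representation.linHom_apply, LinearMap.comp_apply]
    have h1 : f ((ρ1 g⁻¹) x) = (ρ2 g⁻¹) (f x) := congrArg (fun F => F x) (hf g⁻¹)
    rw [h1, ← Module.End.mul_apply, ← map_mul, mul_inv_cancel, map_one, Module.End.one_apply]

set_option maxHeartbeats 1000000 in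
/-- Let `G` be a finite group, `k` a number field inside `ℂ`, and `M` a
finite-dimensional `k`-linear representation of `G`.  If an irreducible complex representation
`φ` of `G` occurs with multiplicity exactly one in the complexification `ℂ ⊗[k] M` and its
character takes values in `k`, then `φ` can be realized over `k`. -/
theorem realizable_of_multiplicity_one (G : Type) [Group G] [Fintype G]
    (k : Type) [Field k] [NumberField k] [Algebra k ℂ]
    (M : Type) [AddCommGroup M] [Module k M] [FiniteDimensional k M]
    (ρM : Representation k G M)
    (φ : FDRep ℂ G) (hφ : CategoryTheory.Simple φ)
    (hmult : charInner φ.character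
      (fun g => LinearMap.trace ℂ (ℂ ⊗[k] M) (LinearMap.baseChange ℂ (ρM g))) = 1)
    (hvals : ∀ g : G, φ.character g ∈ Set.range (algebraMap k ℂ)) :
    ∃ W : Rep k G, FiniteDimensional k W ∧
      ∃ e : (ℂ ⊗[k] W) ≃ₗ[ℂ] φ,
        ∀ (g : G) (x : ℂ ⊗[k] W), e (LinearMap.baseChange ℂ (W.ρ g) x) = φ.ρ g (e x) := by
  classical
  haveI := hφ
  have hn0 : (Fintype.card G : ℂ) ≠ 0 := Nat.cast_ne_zero.mpr Fintype.card_ne_zero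
  haveI : Invertible (Fintype.card G : ℂ) := invertibleOfNonzero hn0
  set n : ℕ := Fintype.card G with hndef
  -- the complexified representation
  let π : Representation ℂ G (ℂ ⊗[k] M) :=
    { toFun := fun g => LinearMap.baseChange ℂ (ρM g)
      map_one' := by
        show LinearMap.baseChange ℂ (ρM 1) = 1
        rw [map_one]; exact LinearMap.baseChange_one k M
      map_mul' := fun g h => by
        show LinearMap.baseChange ℂ (ρM (g * h)) = _
        rw [map_mul]; exact LinearMap.baseChange_mul (ρM g) (ρM h) }
  have hπ : ∀ g, π g = LinearMap.baseChange ℂ (ρM g) := fun g => rfl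
  let V' : FDRep ℂ G := FDRep.of π
  set χφ : G → ℂ := φ.character with hχφdef
  set χV : G → ℂ := fun g => LinearMap.trace ℂ (ℂ ⊗[k] M) (π g) with hχVdef
  set d : ℕ := Module.finrank ℂ φ with hddef
  -- Schur: End is one-dimensional
  have hrk1 : Module.finrank ℂ ((Representation.linHom φ.ρ φ.ρ).invariants) = 1 := by
    rw [(Representation.linHom.invariantsEquivFDRepHom φ φ).finrank_eq,
      FDRep.finrank_hom_simple_simple φ φ, if_pos ⟨CategoryTheory.Iso.refl φ⟩]
  -- orthonormality of χφ
  have hs1 : ∑ g : G, χφ g * χφ g⁻¹ = (n : ℂ) := by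
    have h0 := FDRep.average_char_eq_finrank_invariants (FDRep.of (Representation.linHom φ.ρ φ.ρ))
    have h : ⅟(Fintype.card G : ℂ) • ∑ g : G, (FDRep.of (Representation.linHom φ.ρ φ.ρ)).character g
        = ((Module.finrank ℂ ((Representation.linHom φ.ρ φ.ρ).invariants) : ℕ) : ℂ) := by
      rw [invOf_eq_inv, smul_eq_mul, Fintype.card_eq_nat_card]; exact h0
    rw [hrk1, invOf_eq_inv, smul_eq_mul] at h
    have hch : ∀ g : G, (FDRep.of (Representation.linHom φ.ρ φ.ρ)).character g
        = χφ g * χφ g⁻¹ := by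
      intro g
      rw [FDRep.char_linHom φ φ g, mul_comm]
    rw [Finset.sum_congr rfl fun g _ => hch g, ← hndef] at h
    have h2 := congrArg (fun z => (n : ℂ) * z) h
    simp only [Nat.cast_one] at h2
    rwa [← mul_assoc, mul_inv_cancel₀ hn0, one_mul, mul_one] at h2
  -- multiplicity one in convenient form
  have hs2 : ∑ g : G, χφ g⁻¹ * χV g = (n : ℂ) := by
    have h : (n : ℂ)⁻¹ * ∑ g : G, χφ g * (starRingEnd ℂ) (χV g) = 1 := hmult
    have h2 := congrArg (starRingEnd ℂ) h
    simp only [map_mul, map_sum, map_inv₀, map_natCast, map_one, Complex.conj_conj] at h2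
    have h3 : ∀ g : G, (starRingEnd ℂ) (χφ g) = χφ g⁻¹ := fun g => (char_inv_eq_conj φ g).symm
    simp only [h3] at h2
    have h4 := congrArg (fun z => (n : ℂ) * z) h2
    rwa [← mul_assoc, mul_inv_cancel₀ hn0, one_mul, mul_one] at h4
  -- d is positive
  have hd0 : 0 < d := by
    rcases Nat.eq_zero_or_pos d with h | h
    · exfalso
      haveI : Subsingleton φ := Module.finrank_zero_iff.mp h
      haveI : Subsingleton ((Representation.linHom φ.ρ φ.ρ).invariants) :=
        ⟨fun x y => Subtype.ext (Subsingleton.elim _ _)⟩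
      rw [Module.finrank_zero_of_subsingleton] at hrk1
      exact one_ne_zero hrk1.symm
    · exact h
  have hdC : (d : ℂ) ≠ 0 := Nat.cast_ne_zero.mpr hd0.ne'
  set a : ℂ := (d : ℂ) * (n : ℂ)⁻¹ with hadef
  have ha0 : a ≠ 0 := mul_ne_zero hdC (inv_ne_zero hn0)
  set cχ : G → ℂ := fun g => χφ g⁻¹ with hcχdef
  have hcχ : ∀ g h : G, cχ (h * g * h⁻¹) = cχ g := by
    intro g h
    show χφ (h * g * h⁻¹)⁻¹ = χφ g⁻¹
    have : (h * g * h⁻¹)⁻¹ = h * g⁻¹ * h⁻¹ := by group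
    rw [this, hχφdef]
    exact FDRep.char_conj φ g⁻¹ h
  set Sφ : φ →ₗ[ℂ] φ := ∑ g : G, cχ g • (φ.ρ g : φ →ₗ[ℂ] φ) with hSφdef
  set SV : (ℂ ⊗[k] M) →ₗ[ℂ] (ℂ ⊗[k] M) := ∑ g : G, cχ g • (π g : _ →ₗ[ℂ] _) with hSVdef
  set eV : (ℂ ⊗[k] M) →ₗ[ℂ] (ℂ ⊗[k] M) := a • SV with heVdef
  -- Sφ is a scalar
  have hSφc : Sφ = ((n : ℂ) * (d : ℂ)⁻¹) • LinearMap.id := by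
    have hSφinv : Sφ ∈ (Representation.linHom φ.ρ φ.ρ).invariants := by
      rw [mem_linHom_invariants_iff]
      intro g
      exact sum_smul_ρ_comm φ.ρ cχ hcχ g
    have hidinv : (LinearMap.id : φ →ₗ[ℂ] φ) ∈ (Representation.linHom φ.ρ φ.ρ).invariants := by
      rw [mem_linHom_invariants_iff]
      intro g
      ext x
      simp
    haveI : Nontrivial φ := Module.finrank_pos_iff.mp hd0
    have hv0 : (⟨LinearMap.id, hidinv⟩ : (Representation.linHom φ.ρ φ.ρ).invariants) ≠ 0 := by
      intro h
      obtain ⟨x, hx⟩ := exists_ne (0 : φ)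
      have := congrArg
        (fun v : (Representation.linHom φ.ρ φ.ρ).invariants => (v : φ →ₗ[ℂ] φ) x) h
      simp only [LinearMap.id_apply] at this
      exact hx (by simpa using this)
    obtain ⟨c, hc⟩ := (finrank_eq_one_iff_of_nonzero' _ hv0).mp hrk1 ⟨Sφ, hSφinv⟩
    have hc' : Sφ = c • LinearMap.id := by
      have := congrArg
        (fun v : (Representation.linHom φ.ρ φ.ρ).invariants => (v : φ →ₗ[ℂ] φ)) hc
      simpa using this.symm
    -- determine c via trace
    have htr1 : LinearMap.trace ℂ φ Sφ = (n : ℂ) := by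
      rw [hSφdef, map_sum]
      have : ∀ g : G, LinearMap.trace ℂ φ (cχ g • (φ.ρ g : φ →ₗ[ℂ] φ)) = χφ g * χφ g⁻¹ := by
        intro g
        rw [map_smul, smul_eq_mul, mul_comm]
        rfl
      rw [Finset.sum_congr rfl fun g _ => this g, hs1]
    have htr2 : LinearMap.trace ℂ φ Sφ = c * (d : ℂ) := by
      rw [hc', map_smul, smul_eq_mul, LinearMap.trace_id]
    have hcval : c = (n : ℂ) * (d : ℂ)⁻¹ := by
      have : c * (d : ℂ) = (n : ℂ) := by rw [← htr2, htr1]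
      field_simp at this ⊢
      linear_combination this
    rw [hc', hcval]
  -- trace of Sφ-type sums
  have htrSV : LinearMap.trace ℂ (ℂ ⊗[k] M) eV = (d : ℂ) := by
    rw [heVdef, map_smul, hSVdef, map_sum, smul_eq_mul]
    have hterm : ∀ g : G, LinearMap.trace ℂ (ℂ ⊗[k] M) (cχ g • (π g : _ →ₗ[ℂ] _))
        = χφ g⁻¹ * χV g := by
      intro g
      rw [map_smul, smul_eq_mul]
    rw [Finset.sum_congr rfl fun g _ => hterm g, hs2, hadef]
    field_simp
  -- idempotency
  have hconv : ∀ s : G, ∑ g : G, cχ g * cχ (g⁻¹ * s) = ((n : ℂ) * (d : ℂ)⁻¹) * cχ s := by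
    intro s
    have h1 : LinearMap.trace ℂ φ ((φ.ρ s⁻¹ : φ →ₗ[ℂ] φ) * Sφ)
        = ∑ g : G, cχ g * cχ (g⁻¹ * s) := by
      rw [hSφdef, Finset.mul_sum, map_sum]
      refine Finset.sum_congr rfl fun g _ => ?_
      rw [mul_smul_comm, map_smul, smul_eq_mul, ← map_mul]
      congr 1
      show LinearMap.trace ℂ φ (φ.ρ (s⁻¹ * g)) = φ.character ((g⁻¹ * s)⁻¹)
      have hgs : (g⁻¹ * s)⁻¹ = s⁻¹ * g := by group
      rw [hgs]
      rfl
    have h2 : LinearMap.trace ℂ φ ((φ.ρ s⁻¹ : φ →ₗ[ℂ] φ) * Sφ)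
        = ((n : ℂ) * (d : ℂ)⁻¹) * cχ s := by
      rw [hSφc, mul_smul_comm, show (LinearMap.id : φ →ₗ[ℂ] φ) = 1 from rfl, mul_one,
        map_smul, smul_eq_mul]
      rfl
    rw [← h1, h2]
  have heVidem : eV * eV = eV := by
    have hstep : ∀ g : G, (π g : _ →ₗ[ℂ] _) * SV = ∑ s : G, cχ (g⁻¹ * s) • (π s : _ →ₗ[ℂ] _) := by
      intro g
      rw [hSVdef, Finset.mul_sum]
      refine Fintype.sum_equiv (Equiv.mulLeft g) _ _ fun x => ?_
      simp only [Equiv.coe_mulLeft]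
      rw [inv_mul_cancel_left, mul_smul_comm, ← map_mul]
    have hSS : SV * SV = ((n : ℂ) * (d : ℂ)⁻¹) • SV := by
      conv_lhs => rw [hSVdef]
      rw [Finset.sum_mul]
      have hterm : ∀ g : G, (cχ g • (π g : _ →ₗ[ℂ] _)) * SV
          = ∑ s : G, (cχ g * cχ (g⁻¹ * s)) • (π s : _ →ₗ[ℂ] _) := by
        intro g
        rw [smul_mul_assoc, hstep g, Finset.smul_sum]
        refine Finset.sum_congr rfl fun s _ => ?_
        rw [smul_smul]
      rw [Finset.sum_congr rfl fun g _ => hterm g, Finset.sum_comm]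
      rw [hSVdef, Finset.smul_sum]
      refine Finset.sum_congr rfl fun s _ => ?_
      rw [← Finset.sum_smul, hconv s, smul_smul]
    rw [heVdef, smul_mul_assoc, mul_smul_comm, hSS, smul_smul, smul_smul]
    congr 1
    rw [hadef]
    field_simp
  
  -- U = range eV has dimension d
  set U : Submodule ℂ (ℂ ⊗[k] M) := LinearMap.range eV with hUdef
  have hproj : LinearMap.IsProj U eV := by
    refine ⟨fun x => LinearMap.mem_range_self _ x, fun x hx => ?_⟩
    obtain ⟨y, rfl⟩ := hx
    have := congrArg (fun f => f y) heVidem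
    simpa [Module.End.mul_apply] using this
  have hUd : Module.finrank ℂ U = d := by
    have := hproj.trace
    rw [htrSV] at this
    exact_mod_cast this.symm
  -- the equivariant embedding ℓ : φ →ₗ ℂ ⊗ M
  obtain ⟨ℓ, hℓcomm, hℓinj⟩ :
      ∃ ℓ : φ →ₗ[ℂ] (ℂ ⊗[k] M), (∀ g : G, ℓ ∘ₗ φ.ρ g = π g ∘ₗ ℓ) ∧ Function.Injective ℓ := by
    have hrkV : Module.finrank ℂ ((Representation.linHom φ.ρ π).invariants) = 1 := by
      have h0 := FDRep.average_char_eq_finrank_invariants (FDRep.of (Representation.linHom φ.ρ π))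
      have h : ⅟(Fintype.card G : ℂ) •
            ∑ g : G, (FDRep.of (Representation.linHom φ.ρ π)).character g
          = ((Module.finrank ℂ ((Representation.linHom φ.ρ π).invariants) : ℕ) : ℂ) := by
        rw [invOf_eq_inv, smul_eq_mul, Fintype.card_eq_nat_card]; exact h0
      have hch : ∀ g : G,
          (FDRep.of (Representation.linHom φ.ρ π)).character g = χφ g⁻¹ * χV g := by
        intro g
        exact FDRep.char_linHom φ V' g
      have hcard0 : ((Fintype.card G : ℕ) : ℂ) ≠ 0 := Nat.cast_ne_zero.mpr Fintype.card_ne_zero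
      rw [invOf_eq_inv, smul_eq_mul, Finset.sum_congr rfl fun g _ => hch g, hs2, hndef,
        inv_mul_cancel₀ hcard0] at h
      exact_mod_cast h.symm
    haveI : Nontrivial ((Representation.linHom φ.ρ π).invariants) := by
      apply Module.finrank_pos_iff (R := ℂ) |>.mp
      rw [hrkV]; norm_num
    obtain ⟨w, hw0⟩ := exists_ne (0 : ((Representation.linHom φ.ρ π).invariants))
    have hcomm := (mem_linHom_invariants_iff φ.ρ π w.val).mp w.2
    refine ⟨w.val, hcomm, ?_⟩
    have hker := invariant_subspace_bot_or_top φ (LinearMap.ker w.val) ?_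
    · rcases hker with h | h
      · exact LinearMap.ker_eq_bot.mp h
      · exact absurd (Subtype.ext (LinearMap.ker_eq_top.mp h)) hw0
    · intro g u hu
      have h1 := congrArg (fun f => f u) (hcomm g)
      simp only [LinearMap.comp_apply] at h1
      have hu0 : w.val u = 0 := hu
      rw [LinearMap.mem_ker, h1, hu0, map_zero]
  -- eV fixes the image of ℓ
  have heVℓ : ∀ x : φ, eV (ℓ x) = ℓ x := by
    intro x
    have h1 : SV (ℓ x) = ℓ (Sφ x) := by
      rw [hSVdef, hSφdef]
      simp only [LinearMap.sum_apply, LinearMap.smul_apply, map_sum, map_smul]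
      refine Finset.sum_congr rfl fun g _ => ?_
      congr 1
      exact (congrArg (fun f => f x) (hℓcomm g)).symm
    rw [heVdef, LinearMap.smul_apply, h1, hSφc]
    simp only [LinearMap.smul_apply, LinearMap.id_apply, map_smul]
    rw [smul_smul, hadef, show (d : ℂ) * (n : ℂ)⁻¹ * ((n : ℂ) * (d : ℂ)⁻¹) = 1 by
      field_simp]
    exact one_smul _ _
  have hrangeℓ : LinearMap.range ℓ = U := by
    refine Submodule.eq_of_le_of_finrank_le ?_ ?_
    · rintro _ ⟨x, rfl⟩
      exact ⟨ℓ x, heVℓ x⟩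
    · rw [hUd, LinearMap.finrank_range_of_inj hℓinj]
  -- the rational structure
  set cfun : G → k := fun g => (hvals g⁻¹).choose with hcfundef
  have hcf : ∀ g, algebraMap k ℂ (cfun g) = χφ g⁻¹ := fun g => (hvals g⁻¹).choose_spec
  have hcfconj : ∀ g h : G, cfun (h * g * h⁻¹) = cfun g := by
    intro g h
    apply (algebraMap k ℂ).injective
    rw [hcf, hcf]
    exact hcχ g h
  set a' : k := (d : k) * (n : k)⁻¹ with ha'def
  have ha' : algebraMap k ℂ a' = a := by
    rw [ha'def, map_mul, map_inv₀, map_natCast, map_natCast]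
  set p : M →ₗ[k] M := a' • ∑ g : G, cfun g • (ρM g : M →ₗ[k] M) with hpdef
  have hbc : LinearMap.baseChange ℂ p = eV := by
    have hBCsum : LinearMap.baseChange ℂ (∑ g : G, cfun g • (ρM g : M →ₗ[k] M))
        = ∑ g : G, cfun g • LinearMap.baseChange ℂ (ρM g) := by
      have h0 : LinearMap.baseChange ℂ (∑ g : G, cfun g • (ρM g : M →ₗ[k] M))
          = LinearMap.baseChangeHom k ℂ M M (∑ g : G, cfun g • (ρM g : M →ₗ[k] M)) := rfl
      rw [h0, map_sum]
      refine Finset.sum_congr rfl fun g _ => ?_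
      rw [map_smul]
      rfl
    rw [hpdef, LinearMap.baseChange_smul, hBCsum, heVdef, hSVdef]
    apply LinearMap.ext
    intro x
    have hsm : ∀ (r : k) (v : ℂ ⊗[k] M), r • v = algebraMap k ℂ r • v :=
      fun r v => (algebraMap_smul ℂ r v).symm
    simp only [LinearMap.smul_apply, LinearMap.sum_apply]
    rw [hsm a', ha']
    congr 1
    refine Finset.sum_congr rfl fun g _ => ?_
    rw [hsm (cfun g), hcf g]
    rfl
  have hpcomm : ∀ h : G, p * ρM h = ρM h * p := by
    intro h
    rw [hpdef, smul_mul_assoc, mul_smul_comm]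
    congr 1
    exact sum_smul_ρ_comm ρM cfun hcfconj h
  have hmemrange : ∀ (g : G), ∀ x ∈ LinearMap.range p, ρM g x ∈ LinearMap.range p := by
    rintro g _ ⟨y, rfl⟩
    refine ⟨ρM g y, ?_⟩
    have := congrArg (fun f => f y) (hpcomm g)
    simpa [Module.End.mul_apply] using this
  let ρW : Representation k G (LinearMap.range p) :=
    { toFun := fun g => (ρM g).restrict (hmemrange g)
      map_one' := by ext u; simp [LinearMap.restrict_apply]
      map_mul' := fun g h => by ext u; simp [LinearMap.restrict_apply] }
  let E : ULift.{u_1} (LinearMap.range p) ≃ₗ[k] LinearMap.range p := ULift.moduleEquiv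
  let ρW' : Representation k G (ULift.{u_1} (LinearMap.range p)) :=
    E.symm.conjRingEquiv.toMonoidHom.comp ρW
  refine ⟨Rep.of ρW', inferInstanceAs (FiniteDimensional k (ULift.{u_1} (LinearMap.range p))), ?_⟩
  -- base change of the inclusion
  set j : (LinearMap.range p) →ₗ[k] M := (LinearMap.range p).subtype with hjdef
  set J : (ℂ ⊗[k] (LinearMap.range p)) →ₗ[ℂ] (ℂ ⊗[k] M) := LinearMap.baseChange ℂ j with hJdef
  have hJinj : Function.Injective J := by
    obtain ⟨q, hq⟩ := Submodule.exists_isCompl (LinearMap.range p)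
    set r := (LinearMap.range p).linearProjOfIsCompl q hq with hrdef
    have hrj : r ∘ₗ j = LinearMap.id := by
      ext x
      simp [hjdef, hrdef, Submodule.linearProjOfIsCompl_apply_left]
      exact Submodule.projectionOnto_apply_left hq x
    have hcomp : LinearMap.baseChange ℂ r ∘ₗ J = LinearMap.id := by
      rw [hJdef, ← LinearMap.baseChange_comp, hrj, LinearMap.baseChange_id]
    intro x y hxy
    have h1 := congrArg (LinearMap.baseChange ℂ r) hxy
    have hx := congrArg (fun f => f x) hcomp
    have hy := congrArg (fun f => f y) hcomp
    simp only [LinearMap.comp_apply, LinearMap.id_apply] at hx hy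
    rw [← hx, ← hy, h1]
  have hJρ : ∀ g : G, J ∘ₗ LinearMap.baseChange ℂ (ρW g) = π g ∘ₗ J := by
    intro g
    rw [hπ g, hJdef, ← LinearMap.baseChange_comp, ← LinearMap.baseChange_comp]
    congr 1
  have hrangeJ : LinearMap.range J = U := by
    have hcomp : j ∘ₗ p.rangeRestrict = p := by
      ext x
      rfl
    have hsurj : Function.Surjective (LinearMap.baseChange ℂ p.rangeRestrict) := by
      rw [LinearMap.baseChange_eq_ltensor]
      exact LinearMap.lTensor_surjective ℂ p.surjective_rangeRestrict
    have hfact : LinearMap.baseChange ℂ p = J ∘ₗ LinearMap.baseChange ℂ p.rangeRestrict := by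
      rw [hJdef, ← LinearMap.baseChange_comp, hcomp]
    rw [hUdef, ← hbc, hfact]
    exact (LinearMap.range_comp_of_range_eq_top J (LinearMap.range_eq_top.mpr hsurj)).symm
  have hJℓsub : ∀ x, J x ∈ LinearMap.range ℓ := by
    intro x
    rw [hrangeℓ, ← hrangeJ]
    exact LinearMap.mem_range_self _ x
  set u : (ℂ ⊗[k] (LinearMap.range p)) →ₗ[ℂ] φ :=
    (LinearEquiv.ofInjective ℓ hℓinj).symm.toLinearMap ∘ₗ
      (J.codRestrict (LinearMap.range ℓ) hJℓsub) with hudef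
  have hkey : ∀ z : LinearMap.range ℓ, ℓ ((LinearEquiv.ofInjective ℓ hℓinj).symm z) = (z : ℂ ⊗[k] M) := by
    intro z
    rw [← LinearEquiv.ofInjective_apply ℓ (h := hℓinj), LinearEquiv.apply_symm_apply]
  have hu : ∀ x, ℓ (u x) = J x := by
    intro x
    rw [hudef]
    simp only [LinearMap.comp_apply, LinearEquiv.coe_toLinearMap]
    rw [hkey]
    rfl
  have huinj : Function.Injective u := by
    intro x y hxy
    apply hJinj
    rw [← hu, ← hu, hxy]
  have husurj : Function.Surjective u := by
    intro y
    have : ℓ y ∈ LinearMap.range J := by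
      rw [hrangeJ, ← hrangeℓ]
      exact LinearMap.mem_range_self _ y
    obtain ⟨x, hx⟩ := this
    exact ⟨x, hℓinj (by rw [hu x, hx])⟩
  refine ⟨(E.baseChange k ℂ _ _).trans (LinearEquiv.ofBijective u ⟨huinj, husurj⟩), ?_⟩
  intro g x0
  have hx0 : E.baseChange k ℂ _ _ (LinearMap.baseChange ℂ ((Rep.of ρW').ρ g) x0)
      = LinearMap.baseChange ℂ (ρW g) (E.baseChange k ℂ _ _ x0) := by
    induction x0 using TensorProduct.induction_on with
    | zero => simp
    | tmul c y => rfl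
    | add x y hx hy => simp only [map_add, hx, hy]
  rw [LinearEquiv.trans_apply, LinearEquiv.trans_apply, hx0]
  generalize E.baseChange k ℂ _ _ x0 = x
  apply hℓinj
  show ℓ (u _) = ℓ (φ.ρ g (u x))
  rw [hu]
  have h1 : J (LinearMap.baseChange ℂ (ρW g) x) = π g (J x) :=
    congrArg (fun f => f x) (hJρ g)
  rw [h1, ← hu]
  exact (congrArg (fun f => f (u x)) (hℓcomm g)).symm
end

section
/- Let d ≥ 1, ζ = exp(2πi/d), and let W ⊂ GL_2(ℂ) be the subgroup generated by the diagonal matrix t = diag(1, ζ) and the permutation matrix s = [[0,1],[1,0]] (this is the complex reflection group G(d,1,2)). Then every irreducible character of W lies in the subring of the ring of class functions on W generated by the character of the inclusion W ↪ GL_2(ℂ) together with all group homomorphisms W → ℂ^×. In other words, R(W) is generated by the natural 2-dimensional representation and the 1-dimensional representations. -/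
open Matrix Complex

noncomputable section

/-- The diagonal reflection `t = diag(1, ζ)` with `ζ = exp(2πi/d)`, as an element of
`GL₂(ℂ)`. -/
def genT (d : ℕ) : GL (Fin 2) ℂ :=
  { val := Matrix.diagonal ![1, Complex.exp (2 * Real.pi * Complex.I / d)],
    inv := Matrix.diagonal ![1, (Complex.exp (2 * Real.pi * Complex.I / d))⁻¹],
    val_inv := by
      rw [Matrix.diagonal_mul_diagonal]
      have h : Complex.exp (2 * Real.pi * Complex.I / d) ≠ 0 := Complex.exp_ne_zero _
      ext i j
      fin_cases i <;> fin_cases j <;>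
        simp [Matrix.diagonal, Matrix.one_apply, mul_inv_cancel₀ h]
    inv_val := by
      rw [Matrix.diagonal_mul_diagonal]
      have h : Complex.exp (2 * Real.pi * Complex.I / d) ≠ 0 := Complex.exp_ne_zero _
      ext i j
      fin_cases i <;> fin_cases j <;>
        simp [Matrix.diagonal, Matrix.one_apply, inv_mul_cancel₀ h] }

/-- The transposition matrix `s = [[0,1],[1,0]]`, as an element of `GL₂(ℂ)`. -/
def genS : GL (Fin 2) ℂ :=
  { val := !![0, 1; 1, 0],
    inv := !![0, 1; 1, 0],
    val_inv := by
      ext i j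
      fin_cases i <;> fin_cases j <;> simp [Matrix.mul_apply, Fin.sum_univ_two, Matrix.one_apply]
    inv_val := by
      ext i j
      fin_cases i <;> fin_cases j <;> simp [Matrix.mul_apply, Fin.sum_univ_two, Matrix.one_apply] }

/-- The complex reflection group `G(d,1,2)`, i.e. the subgroup of `GL₂(ℂ)` generated by
`t = diag(1, ζ)` and the transposition matrix `s`. -/
def Gd12 (d : ℕ) : Subgroup (GL (Fin 2) ℂ) := Subgroup.closure {genT d, genS}

end


noncomputable section Aux
namespace Gd12Aux
open Matrix Complex CategoryTheory

variable {d : ℕ}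

/-- underlying matrix of an element of the group -/
abbrev mat (g : Gd12 d) : Matrix (Fin 2) (Fin 2) ℂ :=
  ((g : GL (Fin 2) ℂ) : Matrix (Fin 2) (Fin 2) ℂ)

lemma mat_mul (g h : Gd12 d) : mat (g * h) = mat g * mat h := rfl
lemma mat_one : mat (1 : Gd12 d) = 1 := rfl

abbrev zet (d : ℕ) : ℂ := Complex.exp (2 * Real.pi * Complex.I / d)

lemma zet_ne_zero : zet d ≠ 0 := Complex.exp_ne_zero _

lemma zet_pow_d (hd : d ≠ 0) : zet d ^ d = 1 :=
  (Complex.isPrimitiveRoot_exp d hd).pow_eq_one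

lemma diag_eq (a b : ℂ) : Matrix.diagonal ![a, b] = !![a, 0; 0, b] := by
  ext i j; fin_cases i <;> fin_cases j <;> simp [Matrix.diagonal]

def tW (d : ℕ) : Gd12 d := ⟨genT d, Subgroup.subset_closure (Set.mem_insert _ _)⟩
def sW (d : ℕ) : Gd12 d := ⟨genS, Subgroup.subset_closure (Set.mem_insert_of_mem _ rfl)⟩

lemma mat_tW : mat (tW d) = !![1, 0; 0, zet d] := by
  show ((genT d : GL (Fin 2) ℂ) : Matrix (Fin 2) (Fin 2) ℂ) = _
  show Matrix.diagonal ![1, zet d] = _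
  exact diag_eq _ _

lemma mat_sW : mat (sW d) = !![0, 1; 1, 0] := rfl

end Gd12Aux
end Aux

namespace Gd12Aux
open Matrix Complex
variable {d : ℕ}

lemma ne_zero_of_pow (hd : d ≠ 0) {x : ℂ} (h : x ^ d = 1) : x ≠ 0 := by
  rintro rfl; rw [zero_pow hd] at h; exact zero_ne_one h

lemma structure_aux (hd : d ≠ 0) (u : GL (Fin 2) ℂ) (hu : u ∈ Gd12 d) :
    ∃ x y : ℂ, x ^ d = 1 ∧ y ^ d = 1 ∧
      ((u : Matrix (Fin 2) (Fin 2) ℂ) = !![x, 0; 0, y] ∨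
       (u : Matrix (Fin 2) (Fin 2) ℂ) = !![0, x; y, 0]) := by
  induction hu using Subgroup.closure_induction with
  | mem x hx =>
      rcases hx with h | h
      · subst h
        exact ⟨1, zet d, one_pow d, zet_pow_d hd, Or.inl (diag_eq 1 (zet d))⟩
      · rw [Set.mem_singleton_iff] at h; subst h
        exact ⟨1, 1, one_pow d, one_pow d, Or.inr rfl⟩
  | one => exact ⟨1, 1, one_pow d, one_pow d, Or.inl (by rw [Units.val_one, Matrix.one_fin_two])⟩
  | mul x y hx hy px py =>
      obtain ⟨x0, y0, hx0, hy0, h0⟩ := px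
      obtain ⟨x1, y1, hx1, hy1, h1⟩ := py
      have hm : ((x * y : GL (Fin 2) ℂ) : Matrix (Fin 2) (Fin 2) ℂ)
          = (x : Matrix (Fin 2) (Fin 2) ℂ) * (y : Matrix (Fin 2) (Fin 2) ℂ) := rfl
      rcases h0 with h0 | h0 <;> rcases h1 with h1 | h1
      · exact ⟨x0 * x1, y0 * y1, by rw [mul_pow, hx0, hx1, one_mul],
          by rw [mul_pow, hy0, hy1, one_mul],
          Or.inl (by rw [hm, h0, h1, Matrix.mul_fin_two]; norm_num)⟩
      · exact ⟨x0 * x1, y0 * y1, by rw [mul_pow, hx0, hx1, one_mul],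
          by rw [mul_pow, hy0, hy1, one_mul],
          Or.inr (by rw [hm, h0, h1, Matrix.mul_fin_two]; norm_num)⟩
      · exact ⟨x0 * y1, y0 * x1, by rw [mul_pow, hx0, hy1, one_mul],
          by rw [mul_pow, hy0, hx1, one_mul],
          Or.inr (by rw [hm, h0, h1, Matrix.mul_fin_two]; norm_num)⟩
      · exact ⟨x0 * y1, y0 * x1, by rw [mul_pow, hx0, hy1, one_mul],
          by rw [mul_pow, hy0, hx1, one_mul],
          Or.inl (by rw [hm, h0, h1, Matrix.mul_fin_two]; norm_num)⟩
  | inv x hx px =>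
      obtain ⟨x0, y0, hx0, hy0, h0⟩ := px
      have hxne : x0 ≠ 0 := ne_zero_of_pow hd hx0
      have hyne : y0 ≠ 0 := ne_zero_of_pow hd hy0
      have hinv : ((x⁻¹ : GL (Fin 2) ℂ) : Matrix (Fin 2) (Fin 2) ℂ)
          * (x : Matrix (Fin 2) (Fin 2) ℂ) = 1 := by
        rw [← Units.val_mul, inv_mul_cancel, Units.val_one]
      rcases h0 with h0 | h0
      · refine ⟨x0⁻¹, y0⁻¹, by rw [inv_pow, hx0, inv_one], by rw [inv_pow, hy0, inv_one],
          Or.inl ?_⟩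
        have hE : (x : Matrix (Fin 2) (Fin 2) ℂ) * !![x0⁻¹, 0; 0, y0⁻¹] = 1 := by
          rw [h0, Matrix.mul_fin_two, Matrix.one_fin_two]
          rw [mul_inv_cancel₀ hxne, mul_inv_cancel₀ hyne]; norm_num
        exact left_inv_eq_right_inv hinv hE
      · refine ⟨y0⁻¹, x0⁻¹, by rw [inv_pow, hy0, inv_one], by rw [inv_pow, hx0, inv_one],
          Or.inr ?_⟩
        have hE : (x : Matrix (Fin 2) (Fin 2) ℂ) * !![0, y0⁻¹; x0⁻¹, 0] = 1 := by
          rw [h0, Matrix.mul_fin_two, Matrix.one_fin_two]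
          rw [mul_inv_cancel₀ hxne, mul_inv_cancel₀ hyne]; norm_num
        exact left_inv_eq_right_inv hinv hE

lemma structure_lemma (hd : d ≠ 0) (g : Gd12 d) :
    ∃ x y : ℂ, x ^ d = 1 ∧ y ^ d = 1 ∧
      (mat g = !![x, 0; 0, y] ∨ mat g = !![0, x; y, 0]) :=
  structure_aux hd g.1 g.2

end Gd12Aux

namespace Gd12Aux
open Matrix Complex
variable {d : ℕ}

/-- determinant as a 1-dimensional character of the group -/
def detHom (d : ℕ) : Gd12 d →* ℂˣ :=
  (Units.map (Matrix.detMonoidHom : Matrix (Fin 2) (Fin 2) ℂ →* ℂ)).comp (Gd12 d).subtype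

lemma detHom_apply (g : Gd12 d) : ((detHom d g : ℂˣ) : ℂ) = (mat g).det := rfl

/-- the sign character (±1 according to diagonal/antidiagonal) -/
noncomputable def signHom (hd : d ≠ 0) : Gd12 d →* ℂˣ where
  toFun g := if mat g 0 0 = 0 then -1 else 1
  map_one' := by show (if mat (1 : Gd12 d) 0 0 = 0 then (-1 : ℂˣ) else 1) = 1; rw [mat_one]; norm_num
  map_mul' g h := by
    obtain ⟨x0, y0, hx0, hy0, h0⟩ := structure_lemma hd g
    obtain ⟨x1, y1, hx1, hy1, h1⟩ := structure_lemma hd h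
    have hx0' := ne_zero_of_pow hd hx0
    have hy0' := ne_zero_of_pow hd hy0
    have hx1' := ne_zero_of_pow hd hx1
    have hy1' := ne_zero_of_pow hd hy1
    rcases h0 with h0 | h0 <;> rcases h1 with h1 | h1 <;>
      simp [mat_mul, h0, h1, Matrix.mul_fin_two, mul_ne_zero, hx0', hy0', hx1', hy1']
end Gd12Aux

namespace Gd12Aux
open Matrix Complex
variable {d : ℕ}

/-- The generating set of class functions from the theorem statement. -/
def gens (d : ℕ) : Set (Gd12 d → ℂ) :=
  {fun g : Gd12 d => Matrix.trace ((g : GL (Fin 2) ℂ) : Matrix (Fin 2) (Fin 2) ℂ)} ∪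
    {f : Gd12 d → ℂ | ∃ χ : Gd12 d →* ℂˣ, f = fun g => (χ g : ℂ)}

lemma hom_mem (χ : Gd12 d →* ℂˣ) :
    (fun g : Gd12 d => ((χ g : ℂˣ) : ℂ)) ∈ Subring.closure (gens d) :=
  Subring.subset_closure (Or.inr ⟨χ, rfl⟩)

lemma trace_mem :
    (fun g : Gd12 d => Matrix.trace (mat g)) ∈ Subring.closure (gens d) :=
  Subring.subset_closure (Or.inl rfl)

/-- The power-sum class functions. -/
def Fn (d : ℕ) (m : ℕ) : Gd12 d → ℂ := fun g => mat g 0 0 ^ m + mat g 1 1 ^ m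

lemma Fn_one : Fn d 1 = fun g : Gd12 d => Matrix.trace (mat g) := by
  funext g
  rw [Fn, Matrix.trace_fin_two, pow_one, pow_one]

lemma signHom_coe (hd : d ≠ 0) (g : Gd12 d) :
    ((signHom hd g : ℂˣ) : ℂ) = if mat g 0 0 = 0 then -1 else 1 := by
  show ((if mat g 0 0 = 0 then (-1 : ℂˣ) else 1 : ℂˣ) : ℂ) = _
  split <;> norm_num

lemma Fn_two (hd : d ≠ 0) :
    Fn d 2 = (fun g : Gd12 d => Matrix.trace (mat g)) * (fun g : Gd12 d => Matrix.trace (mat g))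
      - (fun g => ((detHom d g : ℂˣ) : ℂ)) * (1 + fun g => ((signHom hd g : ℂˣ) : ℂ)) := by
  funext g
  obtain ⟨x, y, hx, hy, h0⟩ := structure_lemma hd g
  have hx' := ne_zero_of_pow hd hx
  simp only [Fn, Pi.sub_apply, Pi.mul_apply, Pi.add_apply, Pi.one_apply, detHom_apply,
    signHom_coe hd]
  rcases h0 with h0 | h0 <;>
    rw [h0] <;> simp [Matrix.trace_fin_two, Matrix.det_fin_two, hx'] <;> ring

lemma Fn_rec (hd : d ≠ 0) (k : ℕ) :
    Fn d (k + 3) = (fun g : Gd12 d => Matrix.trace (mat g)) * Fn d (k + 2)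
      - (fun g => ((detHom d g : ℂˣ) : ℂ)) * Fn d (k + 1) := by
  funext g
  obtain ⟨x, y, hx, hy, h0⟩ := structure_lemma hd g
  simp only [Fn, Pi.sub_apply, Pi.mul_apply, detHom_apply]
  rcases h0 with h0 | h0 <;>
    rw [h0] <;> simp [Matrix.trace_fin_two, Matrix.det_fin_two] <;> ring

lemma Fn_mem (hd : d ≠ 0) (m : ℕ) (hm : 1 ≤ m) : Fn d m ∈ Subring.closure (gens d) := by
  have h1 : Fn d 1 ∈ Subring.closure (gens d) := by rw [Fn_one]; exact trace_mem
  have h2 : Fn d 2 ∈ Subring.closure (gens d) := by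
    rw [Fn_two hd]
    exact Subring.sub_mem _ (Subring.mul_mem _ trace_mem trace_mem)
      (Subring.mul_mem _ (hom_mem (detHom d))
        (Subring.add_mem _ (Subring.one_mem _) (hom_mem (signHom hd))))
  have key : ∀ k : ℕ, Fn d (k + 1) ∈ Subring.closure (gens d) ∧
      Fn d (k + 2) ∈ Subring.closure (gens d) := by
    intro k
    induction k with
    | zero => exact ⟨h1, h2⟩
    | succ n ih =>
        refine ⟨ih.2, ?_⟩
        rw [show n + 1 + 2 = n + 3 from rfl, Fn_rec hd n]
        exact Subring.sub_mem _ (Subring.mul_mem _ trace_mem ih.2)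
          (Subring.mul_mem _ (hom_mem (detHom d)) ih.1)
  obtain ⟨k, rfl⟩ : ∃ k, m = k + 1 := ⟨m - 1, by omega⟩
  exact (key k).1

end Gd12Aux

namespace Gd12Aux
open Matrix Complex CategoryTheory
variable {d : ℕ}

lemma rho_inj {G : Type} [Group G] (φ : FDRep ℂ G) (g : G) :
    Function.Injective (φ.ρ g) := by
  intro a b hab
  have h := congrArg (φ.ρ g⁻¹) hab
  rw [← Module.End.mul_apply, ← Module.End.mul_apply, ← _root_.map_mul, inv_mul_cancel,
    _root_.map_one, Module.End.one_apply, Module.End.one_apply] at h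
  exact h

/-- A nonzero invariant subspace of a simple `FDRep` is everything. -/
lemma top_of_invariant {G : Type} [Group G] (φ : FDRep ℂ G) (hφ : CategoryTheory.Simple φ)
    (U : Submodule ℂ φ) (hU : U ≠ ⊥) (hinv : ∀ g : G, ∀ x ∈ U, φ.ρ g x ∈ U) : U = ⊤ := by
  classical
  let ρU : Representation ℂ G U :=
    { toFun := fun g => (φ.ρ g).restrict (hinv g)
      map_one' := by
        ext x
        simp [LinearMap.restrict_apply]
      map_mul' := fun g h => by
        ext x
        simp [LinearMap.restrict_apply, Module.End.mul_apply] }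
  let ψ : FDRep ℂ G := FDRep.of ρU
  let ι : ψ ⟶ φ :=
    { hom := FGModuleCat.ofHom U.subtype
      comm := fun g => by
        ext x
        rfl }
  have hmono : Mono ι := by
    constructor
    intro Z f h hfh
    ext x
    have := congrArg (fun p => p.hom x) hfh
    exact this
  obtain ⟨u, hu, hune⟩ := Submodule.exists_mem_ne_zero_of_ne_bot hU
  have hne : ι ≠ 0 := by
    intro h0
    have : ι.hom ⟨u, hu⟩ = (0 : φ) := by rw [h0]; rfl
    exact hune this
  have hiso : IsIso ι := CategoryTheory.isIso_of_mono_of_nonzero hne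
  rw [Submodule.eq_top_iff']
  intro x
  have : (CategoryTheory.inv ι ≫ ι).hom x = x := by rw [IsIso.inv_hom_id]; rfl
  rw [← this]
  show ι.hom ((CategoryTheory.inv ι).hom x) ∈ U
  exact ((CategoryTheory.inv ι).hom x).2

end Gd12Aux

namespace Gd12Aux
open Matrix Complex CategoryTheory
variable {d : ℕ}

lemma map_eq_of_le {G : Type} [Group G] (φ : FDRep ℂ G) (g : G) (U : Submodule ℂ φ)
    (h : Submodule.map (φ.ρ g) U ≤ U) : Submodule.map (φ.ρ g) U = U := by
  apply Submodule.eq_of_le_of_finrank_le h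
  rw [(Submodule.equivMapOfInjective _ (rho_inj φ g) U).finrank_eq]

lemma invariant_all (φ : FDRep ℂ (Gd12 d)) (U : Submodule ℂ φ)
    (ht : ∀ x ∈ U, φ.ρ (tW d) x ∈ U) (hs : ∀ x ∈ U, φ.ρ (sW d) x ∈ U) :
    ∀ (g : Gd12 d), ∀ x ∈ U, φ.ρ g x ∈ U := by
  have key : ∀ (u : GL (Fin 2) ℂ) (hu : u ∈ Gd12 d),
      Submodule.map (φ.ρ ⟨u, hu⟩) U = U := by
    intro u hu
    induction hu using Subgroup.closure_induction with
    | mem x hx =>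
        rcases hx with h | h
        · subst h
          apply map_eq_of_le
          rintro _ ⟨x0, hx0, rfl⟩
          exact ht x0 hx0
        · rw [Set.mem_singleton_iff] at h; subst h
          apply map_eq_of_le
          rintro _ ⟨x0, hx0, rfl⟩
          exact hs x0 hx0
    | one =>
        apply map_eq_of_le
        rintro _ ⟨x0, hx0, rfl⟩
        have h1 : φ.ρ (⟨1, one_mem _⟩ : Gd12 d) = LinearMap.id := by
          rw [show (⟨1, one_mem _⟩ : Gd12 d) = (1 : Gd12 d) from rfl, _root_.map_one]; rfl
        rw [h1]
        exact hx0
    | mul x y hx hy px py =>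
        have hcomp : φ.ρ (⟨x * y, mul_mem hx hy⟩ : Gd12 d)
            = (φ.ρ ⟨x, hx⟩).comp (φ.ρ ⟨y, hy⟩) := by
          rw [show (⟨x * y, mul_mem hx hy⟩ : Gd12 d) = ⟨x, hx⟩ * ⟨y, hy⟩ from rfl,
            _root_.map_mul]
          rfl
        rw [hcomp, Submodule.map_comp, py, px]
    | inv x hx px =>
        conv_lhs => rw [← px]
        rw [← Submodule.map_comp]
        have hcomp : (φ.ρ (⟨x⁻¹, inv_mem hx⟩ : Gd12 d)).comp (φ.ρ ⟨x, hx⟩)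
            = LinearMap.id := by
          rw [show (⟨x⁻¹, inv_mem hx⟩ : Gd12 d) = (⟨x, hx⟩ : Gd12 d)⁻¹ from rfl,
            ← Module.End.mul_eq_comp, ← _root_.map_mul, inv_mul_cancel, _root_.map_one]
          rfl
        rw [hcomp, Submodule.map_id]
  intro g x hx
  rw [← key g.1 g.2]
  exact Submodule.mem_map_of_mem hx

end Gd12Aux

namespace Gd12Aux
open Matrix Complex
variable {d : ℕ}

lemma sW_sq : sW d * sW d = 1 := by
  apply Subtype.ext
  apply Units.ext
  show (!![0, 1; 1, 0] * !![0, 1; 1, 0] : Matrix (Fin 2) (Fin 2) ℂ) = 1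
  rw [Matrix.mul_fin_two, Matrix.one_fin_two]
  norm_num

lemma tW_pow_d (hd : d ≠ 0) : (tW d) ^ d = 1 := by
  apply Subtype.ext
  apply Units.ext
  show ((genT d).val : Matrix (Fin 2) (Fin 2) ℂ) ^ d = 1
  show (Matrix.diagonal ![1, zet d]) ^ d = 1
  rw [Matrix.diagonal_pow]
  have : (![1, zet d]) ^ d = ![(1 : ℂ), 1] := by
    funext i
    fin_cases i
    · simp
    · simp [zet_pow_d hd]
  rw [this]
  ext i j
  fin_cases i <;> fin_cases j <;> simp [Matrix.diagonal, Matrix.one_apply]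

lemma tW_comm : tW d * (sW d * tW d * sW d) = (sW d * tW d * sW d) * tW d := by
  apply Subtype.ext
  apply Units.ext
  show (genT d).val * ((genS).val * (genT d).val * (genS).val)
      = ((genS).val * (genT d).val * (genS).val) * (genT d).val
  rw [show ((genT d).val : Matrix (Fin 2) (Fin 2) ℂ) = !![1, 0; 0, zet d] from diag_eq _ _,
    show ((genS).val : Matrix (Fin 2) (Fin 2) ℂ) = !![0, 1; 1, 0] from rfl]
  ext i j
  fin_cases i <;> fin_cases j <;> simp [Matrix.mul_apply, Fin.sum_univ_two] <;> ring

end Gd12Aux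


namespace Gd12Aux
lemma etwo {a b c d a' b' c' d' : ℂ} (h1 : a = a') (h2 : b = b') (h3 : c = c') (h4 : d = d') :
    !![a, b; c, d] = !![a', b'; c', d'] := by rw [h1, h2, h3, h4]
end Gd12Aux


set_option maxHeartbeats 1600000 in
open Gd12Aux CategoryTheory in
/-- For the complex reflection group `W = G(d,1,2) ⊂ GL₂(ℂ)`, every
irreducible character of `W` lies in the subring of class functions generated by the
character of the natural 2-dimensional representation (the trace of the inclusion) together
with the 1-dimensional representations `W → ℂˣ`. -/
theorem Gd12_repRing_generated (d : ℕ) (hd : 1 ≤ d)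
    (φ : FDRep ℂ (Gd12 d)) (hφ : CategoryTheory.Simple φ) :
    φ.character ∈ Subring.closure
      ({fun g : Gd12 d => Matrix.trace ((g : GL (Fin 2) ℂ) : Matrix (Fin 2) (Fin 2) ℂ)} ∪
        {f : Gd12 d → ℂ | ∃ χ : Gd12 d →* ℂˣ, f = fun g => (χ g : ℂ)}) := by
  classical
  have hd0 : d ≠ 0 := by omega
  haveI : NeZero d := ⟨hd0⟩
  show φ.character ∈ Subring.closure (gens d)
  -- the module is nontrivial
  haveI hnt : Nontrivial φ := by
    by_contra h
    rw [not_nontrivial_iff_subsingleton] at h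
    have h10 : (𝟙 φ) = (0 : φ ⟶ φ) := by
      apply Action.Hom.ext
      ext x
      exact @Subsingleton.elim _ h _ _
    exact CategoryTheory.id_nonzero φ h10
  -- common eigenvector for t and t' = s t s
  obtain ⟨c, hc⟩ := Module.End.exists_eigenvalue (φ.ρ (tW d))
  set t' : Gd12 d := sW d * tW d * sW d with ht'
  have hcomm : Commute (φ.ρ (tW d)) (φ.ρ t') := by
    show _ * _ = _ * _
    rw [← _root_.map_mul, ← _root_.map_mul, tW_comm]
  have hmapsE : ∀ x ∈ Module.End.eigenspace (φ.ρ (tW d)) c,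
      φ.ρ t' x ∈ Module.End.eigenspace (φ.ρ (tW d)) c := by
    intro x hx
    rw [Module.End.mem_eigenspace_iff] at hx ⊢
    rw [← Module.End.mul_apply, hcomm, Module.End.mul_apply, hx, _root_.map_smul]
  haveI : Nontrivial (Module.End.eigenspace (φ.ρ (tW d)) c) :=
    Submodule.nontrivial_iff_ne_bot.mpr hc
  obtain ⟨c', hc'⟩ := Module.End.exists_eigenvalue ((φ.ρ t').restrict hmapsE)
  obtain ⟨ve, hve⟩ := hc'.exists_hasEigenvector
  set v : φ := (ve : φ) with hv
  have hv0 : v ≠ 0 := fun h => hve.2 (Subtype.ext h)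
  have hAv : φ.ρ (tW d) v = c • v := Module.End.mem_eigenspace_iff.mp ve.2
  have hBv : φ.ρ t' v = c' • v := by
    have h1 := Module.End.mem_eigenspace_iff.mp hve.1
    have h2 := congrArg (Subtype.val) h1
    simpa using h2
  set w : φ := φ.ρ (sW d) v with hw
  have hsv : φ.ρ (sW d) w = v := by
    rw [hw, ← Module.End.mul_apply, ← _root_.map_mul, sW_sq, _root_.map_one, Module.End.one_apply]
  have htw : φ.ρ (tW d) w = c' • w := by
    have h1 : tW d * sW d = sW d * t' := by
      rw [ht', show sW d * (sW d * tW d * sW d) = (sW d * sW d) * (tW d * sW d) from by group,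
        sW_sq, one_mul]
    rw [hw, ← Module.End.mul_apply, ← _root_.map_mul, h1, _root_.map_mul, Module.End.mul_apply,
      hBv, _root_.map_smul]
  -- eigenvalues are d-th roots of unity
  have hpow : ∀ (g : Gd12 d) (z : ℂ) (x : φ), φ.ρ g x = z • x →
      ∀ k : ℕ, φ.ρ (g ^ k) x = z ^ k • x := by
    intro g z x hgx k
    induction k with
    | zero => simp
    | succ n ih =>
        rw [pow_succ, pow_succ, _root_.map_mul, Module.End.mul_apply, hgx, _root_.map_smul, ih,
          smul_smul, mul_comm z (z ^ n)]
  have root_of : ∀ (g : Gd12 d) (z : ℂ), g ^ d = 1 → φ.ρ g v = z • v → z ^ d = 1 := by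
    intro g z hg hgv
    have h1 := hpow g z v hgv d
    rw [hg, _root_.map_one, Module.End.one_apply] at h1
    have h2 : (z ^ d - 1) • v = 0 := by rw [sub_smul, one_smul, ← h1, sub_self]
    rcases smul_eq_zero.mp h2 with h | h
    · exact sub_eq_zero.mp h
    · exact absurd h hv0
  have htd : tW d ^ d = 1 := tW_pow_d hd0
  have hconj : ∀ k : ℕ, t' ^ k = sW d * tW d ^ k * sW d := by
    intro k
    induction k with
    | zero => rw [pow_zero, pow_zero, mul_one, sW_sq]
    | succ n ih =>
        rw [pow_succ, ih, ht']
        rw [show sW d * tW d ^ n * sW d * (sW d * tW d * sW d)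
            = sW d * tW d ^ n * (sW d * sW d) * tW d * sW d from by group, sW_sq]
        group
  have ht'd : t' ^ d = 1 := by rw [hconj d, htd, mul_one, sW_sq]
  have hcd : c ^ d = 1 := root_of (tW d) c htd hAv
  have hc'd : c' ^ d = 1 := root_of t' c' ht'd hBv
  obtain ⟨b0, hb0lt, hb0⟩ := (Complex.isPrimitiveRoot_exp d hd0).eq_pow_of_pow_eq_one hcd
  obtain ⟨a0, ha0lt, ha0⟩ := (Complex.isPrimitiveRoot_exp d hd0).eq_pow_of_pow_eq_one hc'd
  by_cases hdep : ∃ μ : ℂ, w = μ • v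
  · -- one-dimensional case
    set U : Submodule ℂ φ := ℂ ∙ v with hU
    have hUne : U ≠ ⊥ := fun h => hv0 (Submodule.span_singleton_eq_bot.mp h)
    have hvU : v ∈ U := Submodule.mem_span_singleton_self v
    obtain ⟨μ, hμ⟩ := hdep
    have ht1 : ∀ x ∈ U, φ.ρ (tW d) x ∈ U := by
      intro x hx
      obtain ⟨a, rfl⟩ := Submodule.mem_span_singleton.mp hx
      rw [_root_.map_smul, hAv]
      exact Submodule.smul_mem _ _ (Submodule.smul_mem _ _ hvU)
    have hs1 : ∀ x ∈ U, φ.ρ (sW d) x ∈ U := by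
      intro x hx
      obtain ⟨a, rfl⟩ := Submodule.mem_span_singleton.mp hx
      rw [_root_.map_smul]
      show a • w ∈ U
      rw [hμ]
      exact Submodule.smul_mem _ _ (Submodule.smul_mem _ _ hvU)
    have hUtop : U = ⊤ := top_of_invariant φ hφ U hUne (invariant_all φ U ht1 hs1)
    have hli : LinearIndependent ℂ ![v] := linearIndependent_unique_iff.mpr (by simpa using hv0)
    have hsp : ⊤ ≤ Submodule.span ℂ (Set.range ![v]) := by
      rw [show Set.range ![v] = {v} from by
        ext z; simp [Fin.exists_fin_one]]
      exact le_of_eq hUtop.symm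
    set b1 : Module.Basis (Fin 1) ℂ φ := Module.Basis.mk hli hsp with hb1
    set χf : Gd12 d → ℂ := fun g => LinearMap.toMatrix b1 b1 (φ.ρ g) 0 0 with hχf
    have hχmul : ∀ g h : Gd12 d, χf (g * h) = χf g * χf h := by
      intro g h
      rw [hχf]
      show LinearMap.toMatrix b1 b1 (φ.ρ (g * h)) 0 0 = _
      rw [_root_.map_mul, LinearMap.toMatrix_mul b1, Matrix.mul_apply, Fin.sum_univ_one]
    have hχone : χf 1 = 1 := by
      rw [hχf]
      show LinearMap.toMatrix b1 b1 (φ.ρ 1) 0 0 = 1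
      rw [_root_.map_one, LinearMap.toMatrix_one, Matrix.one_apply_eq]
    have hχne : ∀ g : Gd12 d, χf g ≠ 0 := by
      intro g
      have h1 : χf g * χf g⁻¹ = 1 := by rw [← hχmul, mul_inv_cancel, hχone]
      exact left_ne_zero_of_mul_eq_one h1
    set χ : Gd12 d →* ℂˣ :=
      { toFun := fun g => Units.mk0 (χf g) (hχne g)
        map_one' := Units.ext hχone
        map_mul' := fun g h => Units.ext (hχmul g h) } with hχ
    have hchar : φ.character = fun g : Gd12 d => ((χ g : ℂˣ) : ℂ) := by
      funext g
      show LinearMap.trace ℂ _ (φ.ρ g) = χf g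
      rw [LinearMap.trace_eq_matrix_trace ℂ b1 (φ.ρ g), Matrix.trace_fin_one]
    rw [hchar]
    exact hom_mem χ
  · -- two-dimensional case
    push_neg at hdep
    have hb0' : zet d ^ b0 = c := hb0
    have ha0' : zet d ^ a0 = c' := ha0
    have hw0 : w ≠ 0 := fun h => hdep 0 (by rw [h, zero_smul])
    have hvnotw : ∀ a : ℂ, a • w ≠ v := by
      intro a ha
      by_cases haz : a = 0
      · rw [haz, zero_smul] at ha
        exact hv0 ha.symm
      · refine hdep a⁻¹ ?_
        rw [← ha, smul_smul, inv_mul_cancel₀ haz, one_smul]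
    have li : LinearIndependent ℂ ![v, w] :=
      linearIndependent_fin2.mpr ⟨by simpa using hw0, fun a => by simpa using hvnotw a⟩
    set U2 : Submodule ℂ φ := Submodule.span ℂ (Set.range ![v, w]) with hU2
    have memv : v ∈ U2 := Submodule.subset_span ⟨0, rfl⟩
    have memw : w ∈ U2 := Submodule.subset_span ⟨1, rfl⟩
    have ht2 : ∀ x ∈ U2, φ.ρ (tW d) x ∈ U2 := by
      intro x hx
      induction hx using Submodule.span_induction with
      | mem z hz =>
          obtain ⟨i, rfl⟩ := hz
          fin_cases i
          · show φ.ρ (tW d) v ∈ U2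
            rw [hAv]; exact Submodule.smul_mem _ _ memv
          · show φ.ρ (tW d) w ∈ U2
            rw [htw]; exact Submodule.smul_mem _ _ memw
      | zero => rw [map_zero]; exact zero_mem _
      | add y z _ _ hy hz => rw [map_add]; exact add_mem hy hz
      | smul a y _ hy => rw [_root_.map_smul]; exact Submodule.smul_mem _ _ hy
    have hs2 : ∀ x ∈ U2, φ.ρ (sW d) x ∈ U2 := by
      intro x hx
      induction hx using Submodule.span_induction with
      | mem z hz =>
          obtain ⟨i, rfl⟩ := hz
          fin_cases i
          · show φ.ρ (sW d) v ∈ U2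
            rw [← hw]; exact memw
          · show φ.ρ (sW d) w ∈ U2
            rw [hsv]; exact memv
      | zero => rw [map_zero]; exact zero_mem _
      | add y z _ _ hy hz => rw [map_add]; exact add_mem hy hz
      | smul a y _ hy => rw [_root_.map_smul]; exact Submodule.smul_mem _ _ hy
    have hU2ne : U2 ≠ ⊥ := by
      intro h
      apply hv0
      have := memv
      rw [h, Submodule.mem_bot] at this
      exact this
    have hU2top : U2 = ⊤ := top_of_invariant φ hφ U2 hU2ne (invariant_all φ U2 ht2 hs2)
    have hsp2 : ⊤ ≤ Submodule.span ℂ (Set.range ![v, w]) := le_of_eq hU2top.symm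
    set b2 : Module.Basis (Fin 2) ℂ φ := Module.Basis.mk li hsp2 with hb2def
    have hb20v : b2 0 = v := by rw [hb2def, Module.Basis.mk_apply]; rfl
    have hb21w : b2 1 = w := by rw [hb2def, Module.Basis.mk_apply]; rfl
    have hcc : c ≠ c' := by
      intro hcc
      have hvw0 : v + w ≠ 0 := by
        intro h
        apply hvnotw (-1)
        rw [neg_one_smul]
        exact neg_eq_of_add_eq_zero_left h
      have hvwm : v + w ∈ (ℂ ∙ (v + w)) := Submodule.mem_span_singleton_self _
      have ht3 : ∀ x ∈ (ℂ ∙ (v + w)), φ.ρ (tW d) x ∈ (ℂ ∙ (v + w)) := by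
        intro x hx
        obtain ⟨a, rfl⟩ := Submodule.mem_span_singleton.mp hx
        rw [_root_.map_smul, map_add, hAv, htw, ← hcc, ← smul_add]
        exact Submodule.smul_mem _ _ (Submodule.smul_mem _ _ hvwm)
      have hs3 : ∀ x ∈ (ℂ ∙ (v + w)), φ.ρ (sW d) x ∈ (ℂ ∙ (v + w)) := by
        intro x hx
        obtain ⟨a, rfl⟩ := Submodule.mem_span_singleton.mp hx
        rw [_root_.map_smul, map_add, ← hw, hsv, add_comm w v]
        exact Submodule.smul_mem _ _ hvwm
      have h3ne : (ℂ ∙ (v + w)) ≠ ⊥ := fun h => hvw0 (Submodule.span_singleton_eq_bot.mp h)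
      have h3top : (ℂ ∙ (v + w)) = ⊤ :=
        top_of_invariant φ hφ _ h3ne (invariant_all φ _ ht3 hs3)
      have hwmem : w ∈ (ℂ ∙ (v + w)) := by rw [h3top]; trivial
      obtain ⟨α, hα⟩ := Submodule.mem_span_singleton.mp hwmem
      by_cases hαz : α = 0
      · rw [hαz, zero_smul] at hα; exact hw0 hα.symm
      · have h5 : v = (α⁻¹ * (1 - α)) • w := by
          rw [smul_add] at hα
          have h6 : α • v = (1 - α) • w := by
            rw [sub_smul, one_smul]
            exact eq_sub_of_add_eq hα
          rw [mul_smul, ← h6, smul_smul, inv_mul_cancel₀ hαz, one_smul]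
        exact hvnotw _ h5.symm
    have ha0b0 : a0 ≠ b0 := fun h => hcc (by rw [← hb0', ← ha0', h])
    set ψm : Gd12 d → Matrix (Fin 2) (Fin 2) ℂ :=
      fun g => LinearMap.toMatrix b2 b2 (φ.ρ g) with hψmdef
    have hψmul : ∀ g h : Gd12 d, ψm (g * h) = ψm g * ψm h := by
      intro g h
      show LinearMap.toMatrix b2 b2 (φ.ρ (g * h)) = _
      rw [_root_.map_mul, LinearMap.toMatrix_mul]
    have hψone : ψm (1 : Gd12 d) = 1 := by
      show LinearMap.toMatrix b2 b2 (φ.ρ 1) = 1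
      rw [_root_.map_one, LinearMap.toMatrix_one]
    have hψt : ψm (tW d) = !![c, 0; 0, c'] := by
      show LinearMap.toMatrix b2 b2 (φ.ρ (tW d)) = _
      have heq : φ.ρ (tW d) = Matrix.toLin b2 b2 !![c, 0; 0, c'] := by
        refine b2.ext fun i => ?_
        fin_cases i
        · show φ.ρ (tW d) (b2 0) = _
          rw [Matrix.toLin_self, hb20v, hAv, Fin.sum_univ_two, hb20v, hb21w]
          simp
        · show φ.ρ (tW d) (b2 1) = _
          rw [Matrix.toLin_self, hb21w, htw, Fin.sum_univ_two, hb20v, hb21w]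
          simp
      rw [heq, LinearMap.toMatrix_toLin]
    have hψs : ψm (sW d) = !![0, 1; 1, 0] := by
      show LinearMap.toMatrix b2 b2 (φ.ρ (sW d)) = _
      have heq : φ.ρ (sW d) = Matrix.toLin b2 b2 !![0, 1; 1, 0] := by
        refine b2.ext fun i => ?_
        fin_cases i
        · show φ.ρ (sW d) (b2 0) = _
          rw [Matrix.toLin_self, hb20v, ← hw, Fin.sum_univ_two, hb20v, hb21w]
          simp
        · show φ.ρ (sW d) (b2 1) = _
          rw [Matrix.toLin_self, hb21w, hsv, Fin.sum_univ_two, hb20v, hb21w]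
          simp
      rw [heq, LinearMap.toMatrix_toLin]
    have main : ∀ (u : GL (Fin 2) ℂ) (hu : u ∈ Gd12 d), ∃ x y : ℂ, x ≠ 0 ∧ y ≠ 0 ∧
        ((mat (⟨u, hu⟩ : Gd12 d) = !![x, 0; 0, y] ∧
          ψm ⟨u, hu⟩ = !![x ^ a0 * y ^ b0, 0; 0, x ^ b0 * y ^ a0]) ∨
         (mat (⟨u, hu⟩ : Gd12 d) = !![0, x; y, 0] ∧
          ψm ⟨u, hu⟩ = !![0, x ^ a0 * y ^ b0; x ^ b0 * y ^ a0, 0])) := by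
      intro u hu
      induction hu using Subgroup.closure_induction with
      | mem x hx =>
          rcases hx with h | h
          · subst h
            refine ⟨1, zet d, one_ne_zero, zet_ne_zero, Or.inl ⟨mat_tW, ?_⟩⟩
            show ψm (tW d) = _
            rw [hψt]
            refine etwo ?_ rfl rfl ?_
            · rw [one_pow, one_mul, hb0']
            · rw [one_pow, one_mul, ha0']
          · rw [Set.mem_singleton_iff] at h; subst h
            refine ⟨1, 1, one_ne_zero, one_ne_zero, Or.inr ⟨mat_sW, ?_⟩⟩
            show ψm (sW d) = _
            rw [hψs]
            exact etwo rfl (by norm_num) (by norm_num) rfl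
      | one =>
          refine ⟨1, 1, one_ne_zero, one_ne_zero, Or.inl ⟨?_, ?_⟩⟩
          · rw [show (⟨1, one_mem _⟩ : Gd12 d) = 1 from rfl, mat_one, Matrix.one_fin_two]
          · rw [show (⟨1, one_mem _⟩ : Gd12 d) = 1 from rfl, hψone, Matrix.one_fin_two]
            exact etwo (by norm_num) rfl rfl (by norm_num)
      | mul x y hx hy px py =>
          obtain ⟨x0, y0, hx0, hy0, h0⟩ := px
          obtain ⟨x1, y1, hx1, hy1, h1⟩ := py
          have hmm : mat (⟨x * y, mul_mem hx hy⟩ : Gd12 d) = mat ⟨x, hx⟩ * mat ⟨y, hy⟩ := rfl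
          have hpm : ψm (⟨x * y, mul_mem hx hy⟩ : Gd12 d) = ψm ⟨x, hx⟩ * ψm ⟨y, hy⟩ :=
            hψmul ⟨x, hx⟩ ⟨y, hy⟩
          rcases h0 with ⟨hm0, hp0⟩ | ⟨hm0, hp0⟩ <;> rcases h1 with ⟨hm1, hp1⟩ | ⟨hm1, hp1⟩
          · exact ⟨x0 * x1, y0 * y1, mul_ne_zero hx0 hx1, mul_ne_zero hy0 hy1, Or.inl
              ⟨by rw [hmm, hm0, hm1, Matrix.mul_fin_two]; exact etwo (by ring) (by ring) (by ring) (by ring),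
               by rw [hpm, hp0, hp1, Matrix.mul_fin_two]; exact etwo (by ring) (by ring) (by ring) (by ring)⟩⟩
          · exact ⟨x0 * x1, y0 * y1, mul_ne_zero hx0 hx1, mul_ne_zero hy0 hy1, Or.inr
              ⟨by rw [hmm, hm0, hm1, Matrix.mul_fin_two]; exact etwo (by ring) (by ring) (by ring) (by ring),
               by rw [hpm, hp0, hp1, Matrix.mul_fin_two]; exact etwo (by ring) (by ring) (by ring) (by ring)⟩⟩
          · exact ⟨x0 * y1, y0 * x1, mul_ne_zero hx0 hy1, mul_ne_zero hy0 hx1, Or.inr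
              ⟨by rw [hmm, hm0, hm1, Matrix.mul_fin_two]; exact etwo (by ring) (by ring) (by ring) (by ring),
               by rw [hpm, hp0, hp1, Matrix.mul_fin_two]; exact etwo (by ring) (by ring) (by ring) (by ring)⟩⟩
          · exact ⟨x0 * y1, y0 * x1, mul_ne_zero hx0 hy1, mul_ne_zero hy0 hx1, Or.inl
              ⟨by rw [hmm, hm0, hm1, Matrix.mul_fin_two]; exact etwo (by ring) (by ring) (by ring) (by ring),
               by rw [hpm, hp0, hp1, Matrix.mul_fin_two]; exact etwo (by ring) (by ring) (by ring) (by ring)⟩⟩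
      | inv x hx px =>
          obtain ⟨x0, y0, hx0, hy0, h0⟩ := px
          have hmatinv : mat ((⟨x, hx⟩ : Gd12 d)⁻¹) * mat ⟨x, hx⟩ = 1 := by
            rw [← mat_mul, inv_mul_cancel, mat_one]
          have hψinv : ψm ((⟨x, hx⟩ : Gd12 d)⁻¹) * ψm ⟨x, hx⟩ = 1 := by
            rw [← hψmul, inv_mul_cancel, hψone]
          rcases h0 with ⟨hm0, hp0⟩ | ⟨hm0, hp0⟩
          · refine ⟨x0⁻¹, y0⁻¹, inv_ne_zero hx0, inv_ne_zero hy0, Or.inl ⟨?_, ?_⟩⟩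
            · have hE : mat (⟨x, hx⟩ : Gd12 d) * !![x0⁻¹, 0; 0, y0⁻¹] = 1 := by
                rw [hm0, Matrix.mul_fin_two, Matrix.one_fin_two]
                exact etwo (by field_simp; norm_num) (by ring) (by ring) (by field_simp; norm_num)
              exact left_inv_eq_right_inv hmatinv hE
            · have hE : ψm (⟨x, hx⟩ : Gd12 d)
                  * !![x0⁻¹ ^ a0 * y0⁻¹ ^ b0, 0; 0, x0⁻¹ ^ b0 * y0⁻¹ ^ a0] = 1 := by
                rw [hp0, Matrix.mul_fin_two, Matrix.one_fin_two]
                refine etwo ?_ (by ring) (by ring) ?_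
                · rw [show x0 ^ a0 * y0 ^ b0 * (x0⁻¹ ^ a0 * y0⁻¹ ^ b0) + 0 * 0
                      = (x0 * x0⁻¹) ^ a0 * (y0 * y0⁻¹) ^ b0 from by ring,
                    mul_inv_cancel₀ hx0, mul_inv_cancel₀ hy0, one_pow, one_pow, one_mul]
                · rw [show 0 * 0 + x0 ^ b0 * y0 ^ a0 * (x0⁻¹ ^ b0 * y0⁻¹ ^ a0)
                      = (x0 * x0⁻¹) ^ b0 * (y0 * y0⁻¹) ^ a0 from by ring,
                    mul_inv_cancel₀ hx0, mul_inv_cancel₀ hy0, one_pow, one_pow, one_mul]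
              exact left_inv_eq_right_inv hψinv hE
          · refine ⟨y0⁻¹, x0⁻¹, inv_ne_zero hy0, inv_ne_zero hx0, Or.inr ⟨?_, ?_⟩⟩
            · have hE : mat (⟨x, hx⟩ : Gd12 d) * !![0, y0⁻¹; x0⁻¹, 0] = 1 := by
                rw [hm0, Matrix.mul_fin_two, Matrix.one_fin_two]
                exact etwo (by field_simp; norm_num) (by ring) (by ring) (by field_simp; norm_num)
              exact left_inv_eq_right_inv hmatinv hE
            · have hE : ψm (⟨x, hx⟩ : Gd12 d)
                  * !![0, y0⁻¹ ^ a0 * x0⁻¹ ^ b0; y0⁻¹ ^ b0 * x0⁻¹ ^ a0, 0] = 1 := by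
                rw [hp0, Matrix.mul_fin_two, Matrix.one_fin_two]
                refine etwo ?_ (by ring) (by ring) ?_
                · rw [show 0 * 0 + x0 ^ a0 * y0 ^ b0 * (y0⁻¹ ^ b0 * x0⁻¹ ^ a0)
                      = (x0 * x0⁻¹) ^ a0 * (y0 * y0⁻¹) ^ b0 from by ring,
                    mul_inv_cancel₀ hx0, mul_inv_cancel₀ hy0, one_pow, one_pow, one_mul]
                · rw [show x0 ^ b0 * y0 ^ a0 * (y0⁻¹ ^ a0 * x0⁻¹ ^ b0) + 0 * 0
                      = (x0 * x0⁻¹) ^ b0 * (y0 * y0⁻¹) ^ a0 from by ring,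
                    mul_inv_cancel₀ hx0, mul_inv_cancel₀ hy0, one_pow, one_pow, one_mul]
              exact left_inv_eq_right_inv hψinv hE
    set B1 := min a0 b0 with hB1
    set m := max a0 b0 - min a0 b0 with hmdef
    have hm1 : 1 ≤ m := by
      rw [hmdef]
      rcases Nat.lt_or_ge a0 b0 with h | h
      · rw [min_eq_left (le_of_lt h), max_eq_right (le_of_lt h)]; omega
      · rw [min_eq_right h, max_eq_left h]; omega
    have hchar2 : φ.character
        = (fun g : Gd12 d => (((detHom d ^ B1) g : ℂˣ) : ℂ)) * Fn d m := by
      funext g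
      have hg := main g.1 g.2
      obtain ⟨x, y, hxne, hyne, hcase⟩ := hg
      show LinearMap.trace ℂ _ (φ.ρ g) = _
      rw [LinearMap.trace_eq_matrix_trace ℂ b2 (φ.ρ g)]
      have hψg : LinearMap.toMatrix b2 b2 (φ.ρ g) = ψm g := rfl
      rw [hψg]
      have hcoe : ((((detHom d ^ B1) g : ℂˣ) : ℂ)) = ((detHom d g : ℂˣ) : ℂ) ^ B1 := by
        rw [MonoidHom.pow_apply, Units.val_pow_eq_pow_val]
      have hGeq : (⟨g.1, g.2⟩ : Gd12 d) = g := rfl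
      rw [hGeq] at hcase
      rcases hcase with ⟨hm', hp⟩ | ⟨hm', hp⟩
      · rw [hp, Matrix.trace_fin_two_of]
        show _ = (((detHom d ^ B1) g : ℂˣ) : ℂ) * Fn d m g
        rw [hcoe, detHom_apply,
          show Fn d m g = mat g 0 0 ^ m + mat g 1 1 ^ m from rfl, hm', Matrix.det_fin_two_of]
        rcases le_or_gt b0 a0 with hab | hab
        · rw [hB1, hmdef, min_eq_right hab, max_eq_left hab]
          obtain ⟨k, hk⟩ : ∃ k, a0 = b0 + k := ⟨a0 - b0, by omega⟩
          have h00 : (!![x, 0; 0, y] : Matrix (Fin 2) (Fin 2) ℂ) 0 0 = x := rfl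
          have h11 : (!![x, 0; 0, y] : Matrix (Fin 2) (Fin 2) ℂ) 1 1 = y := rfl
          rw [h00, h11, show a0 - b0 = k from by omega, hk]
          ring
        · have hab' : a0 ≤ b0 := le_of_lt hab
          rw [hB1, hmdef, min_eq_left hab', max_eq_right hab']
          obtain ⟨k, hk⟩ : ∃ k, b0 = a0 + k := ⟨b0 - a0, by omega⟩
          have h00 : (!![x, 0; 0, y] : Matrix (Fin 2) (Fin 2) ℂ) 0 0 = x := rfl
          have h11 : (!![x, 0; 0, y] : Matrix (Fin 2) (Fin 2) ℂ) 1 1 = y := rfl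
          rw [h00, h11, show b0 - a0 = k from by omega, hk]
          ring
      · rw [hp, Matrix.trace_fin_two_of]
        show _ = (((detHom d ^ B1) g : ℂˣ) : ℂ) * Fn d m g
        rw [hcoe, detHom_apply,
          show Fn d m g = mat g 0 0 ^ m + mat g 1 1 ^ m from rfl, hm']
        have h00 : (!![0, x; y, 0] : Matrix (Fin 2) (Fin 2) ℂ) 0 0 = 0 := rfl
        have h11 : (!![0, x; y, 0] : Matrix (Fin 2) (Fin 2) ℂ) 1 1 = 0 := rfl
        rw [h00, h11, zero_pow (by omega : m ≠ 0)]
        ring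
    rw [hchar2]
    exact Subring.mul_mem _ (hom_mem (detHom d ^ B1)) (Fn_mem hd0 m hm1)
end

section
/- Let n ≥ 4 and let W ⊂ GL_n(ℂ) be the group of all signed permutation matrices (monomial matrices whose nonzero entries are ±1), i.e. the Coxeter group of type B_n acting by its natural n-dimensional reflection representation ℂ^n. Then the subring of the ring of class functions on W generated by the characters χ_{Λ^k ℂ^n}, 0 ≤ k ≤ n, is a proper subring of the representation ring R(W): there exists an irreducible character of W that does not belong to it. -/
open Matrix

/-- A signed permutation matrix: a monomial matrix whose nonzero entries are `±1`. -/
def IsSignedPerm {n : ℕ} (A : Matrix (Fin n) (Fin n) ℂ) : Prop :=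
  ∃ (σ : Equiv.Perm (Fin n)) (ε : Fin n → ℂ), (∀ j, ε j = 1 ∨ ε j = -1) ∧
    ∀ i j, A i j = if i = σ j then ε j else 0

lemma signedPerm_mul_entries {n : ℕ} {A B : Matrix (Fin n) (Fin n) ℂ}
    {σ τ : Equiv.Perm (Fin n)} {ε δ : Fin n → ℂ}
    (hA : ∀ i j, A i j = if i = σ j then ε j else 0)
    (hB : ∀ i j, B i j = if i = τ j then δ j else 0) :
    ∀ i j, (A * B) i j = if i = (σ * τ) j then ε (τ j) * δ j else 0 := by
  intro i j
  rw [Matrix.mul_apply, Finset.sum_eq_single (τ j)]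
  · rw [hA, hB]
    simp [Equiv.Perm.mul_apply]
    exact if_congr Iff.rfl rfl rfl
  · intro k _ hk
    rw [hB]
    simp [hk]
  · simp

lemma signedPerm_inv_entries {n : ℕ} {A : Matrix (Fin n) (Fin n) ℂ}
    {σ : Equiv.Perm (Fin n)} {ε : Fin n → ℂ} (hε : ∀ j, ε j = 1 ∨ ε j = -1)
    (hA : ∀ i j, A i j = if i = σ j then ε j else 0) :
    ∀ i j, A⁻¹ i j = if i = σ⁻¹ j then ε (σ⁻¹ j) else 0 := by
  have hsq : ∀ j, ε j * ε j = 1 := by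
    intro j
    rcases hε j with h | h <;> rw [h] <;> norm_num
  have hmul : A * Matrix.of (fun i j => if i = σ⁻¹ j then ε (σ⁻¹ j) else 0) = 1 := by
    ext i j
    rw [Matrix.mul_apply, Finset.sum_eq_single (σ⁻¹ j)]
    · rw [hA]
      by_cases h : i = j
      · subst h
        simp [hsq]
      · have h' : ¬ i = σ (σ⁻¹ j) := by simpa using fun hc => h (by simpa using hc)
        simp [h', Matrix.one_apply, h]
    · intro k _ hk
      simp [Matrix.of_apply]
      exact fun hc => absurd hc hk
    · simp
  rw [Matrix.inv_eq_right_inv hmul]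
  intro i j
  rfl

/-- The group of all signed permutation matrices (monomial matrices with nonzero entries `±1`)
inside `GL_n(ℂ)`: the Coxeter group of type `B_n` in its natural reflection representation. -/
def signedPermGroup (n : ℕ) : Subgroup (GL (Fin n) ℂ) where
  carrier := {g | IsSignedPerm (g : Matrix (Fin n) (Fin n) ℂ)}
  one_mem' := ⟨1, fun _ => 1, fun _ => Or.inl rfl, by intro i j; simp [Matrix.one_apply]; exact if_congr Iff.rfl rfl rfl⟩
  mul_mem' := by
    rintro a b ⟨σ, ε, hε, hA⟩ ⟨τ, δ, hδ, hB⟩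
    refine ⟨σ * τ, fun j => ε (τ j) * δ j, fun j => ?_, ?_⟩
    · rcases hε (τ j) with h1 | h1 <;> rcases hδ j with h2 | h2 <;> simp [h1, h2]
    · have : ((a * b : GL (Fin n) ℂ) : Matrix (Fin n) (Fin n) ℂ) =
        (a : Matrix (Fin n) (Fin n) ℂ) * (b : Matrix (Fin n) (Fin n) ℂ) := Units.val_mul a b
      rw [this]
      exact signedPerm_mul_entries hA hB
  inv_mem' := by
    rintro a ⟨σ, ε, hε, hA⟩
    refine ⟨σ⁻¹, fun j => ε (σ⁻¹ j), fun j => hε _, ?_⟩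
    rw [Matrix.coe_units_inv]
    exact signedPerm_inv_entries hε hA

/-- The number of entries of a matrix equal to `-1`. -/
noncomputable def negEntriesCard {n : ℕ} (A : Matrix (Fin n) (Fin n) ℂ) : ℕ :=
  (Finset.univ.filter fun p : Fin n × Fin n => A p.1 p.2 = -1).card

lemma negEntriesCard_eq {n : ℕ} {A : Matrix (Fin n) (Fin n) ℂ} {σ : Equiv.Perm (Fin n)}
    {ε : Fin n → ℂ} (hA : ∀ i j, A i j = if i = σ j then ε j else 0) :
    negEntriesCard A = (Finset.univ.filter fun j => ε j = -1).card := by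
  classical
  apply Finset.card_nbij' (i := fun p => p.2) (j := fun j => (σ j, j))
  · intro p hp
    simp only [Finset.mem_coe, Finset.mem_filter, Finset.mem_univ, true_and] at hp ⊢
    rw [hA] at hp
    by_cases h : p.1 = σ p.2
    · rwa [if_pos h] at hp
    · rw [if_neg h] at hp
      norm_num at hp
  · intro j hj
    simp only [Finset.mem_coe, Finset.mem_filter, Finset.mem_univ, true_and] at hj ⊢
    rw [hA]
    simp [hj]
  · intro p hp
    simp only [Finset.mem_coe, Finset.mem_filter, Finset.mem_univ, true_and] at hp
    rw [hA] at hp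
    by_cases h : p.1 = σ p.2
    · simp [← h]
    · rw [if_neg h] at hp
      norm_num at hp
  · intro j _
    rfl

lemma prod_eq_one_iff_even {n : ℕ} {ε : Fin n → ℂ} (hε : ∀ j, ε j = 1 ∨ ε j = -1) :
    (∏ j, ε j) = 1 ↔ Even (Finset.univ.filter fun j => ε j = -1).card := by
  classical
  have h1 : (∏ j, ε j) = (-1 : ℂ) ^ (Finset.univ.filter fun j => ε j = -1).card := by
    rw [← Finset.prod_filter_mul_prod_filter_not Finset.univ (fun j => ε j = -1) ε]
    rw [Finset.prod_congr rfl (fun j hj => (Finset.mem_filter.mp hj).2),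
      Finset.prod_const]
    have : ∀ j ∈ Finset.univ.filter fun j => ¬ ε j = -1, ε j = 1 := by
      intro j hj
      rcases hε j with h | h
      · exact h
      · exact absurd h (Finset.mem_filter.mp hj).2
    rw [Finset.prod_congr rfl this, Finset.prod_const, one_pow, mul_one]
  rw [h1]
  exact neg_one_pow_eq_one_iff_even (by norm_num)

/-- The Coxeter group of type `D_n`: signed permutation matrices with an even number of
entries equal to `-1`, inside `GL_n(ℂ)`. -/
def evenSignedPermGroup (n : ℕ) : Subgroup (GL (Fin n) ℂ) where
  carrier := {g | IsSignedPerm (g : Matrix (Fin n) (Fin n) ℂ) ∧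
    Even (negEntriesCard (g : Matrix (Fin n) (Fin n) ℂ))}
  one_mem' := by
    have hA : ∀ i j, (1 : Matrix (Fin n) (Fin n) ℂ) i j =
        if i = (1 : Equiv.Perm (Fin n)) j then (fun _ => (1 : ℂ)) j else 0 := by
      intro i j; simp [Matrix.one_apply]; exact if_congr Iff.rfl rfl rfl
    refine ⟨⟨1, fun _ => 1, fun _ => Or.inl rfl, hA⟩, ?_⟩
    rw [show ((1 : GL (Fin n) ℂ) : Matrix (Fin n) (Fin n) ℂ) = 1 from rfl,
      negEntriesCard_eq hA]
    rw [Finset.filter_congr (fun j _ => by norm_num : ∀ j ∈ Finset.univ,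
      ((fun _ => (1:ℂ)) j = -1 ↔ False))]
    simp
  mul_mem' := by
    rintro a b ⟨⟨σ, ε, hε, hA⟩, hae⟩ ⟨⟨τ, δ, hδ, hB⟩, hbe⟩
    have hvals : ∀ j, ε (τ j) * δ j = 1 ∨ ε (τ j) * δ j = -1 := by
      intro j
      rcases hε (τ j) with h1 | h1 <;> rcases hδ j with h2 | h2 <;> simp [h1, h2]
    have hab : ((a * b : GL (Fin n) ℂ) : Matrix (Fin n) (Fin n) ℂ) =
        (a : Matrix (Fin n) (Fin n) ℂ) * (b : Matrix (Fin n) (Fin n) ℂ) := Units.val_mul a b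
    have hABent := signedPerm_mul_entries hA hB
    refine ⟨⟨σ * τ, fun j => ε (τ j) * δ j, hvals, by rw [hab]; exact hABent⟩, ?_⟩
    rw [hab, negEntriesCard_eq hABent, ← prod_eq_one_iff_even hvals]
    rw [Finset.prod_mul_distrib, Equiv.prod_comp τ ε]
    rw [(prod_eq_one_iff_even hε).mpr (by rwa [negEntriesCard_eq hA] at hae),
      (prod_eq_one_iff_even hδ).mpr (by rwa [negEntriesCard_eq hB] at hbe), one_mul]
  inv_mem' := by
    rintro a ⟨⟨σ, ε, hε, hA⟩, hae⟩
    have hent : ∀ i j, ((a⁻¹ : GL (Fin n) ℂ) : Matrix (Fin n) (Fin n) ℂ) i j =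
        if i = σ⁻¹ j then ε (σ⁻¹ j) else 0 := by
      rw [Matrix.coe_units_inv]
      exact signedPerm_inv_entries hε hA
    refine ⟨⟨σ⁻¹, fun j => ε (σ⁻¹ j), fun j => hε _, hent⟩, ?_⟩
    rw [negEntriesCard_eq hent, ← prod_eq_one_iff_even (fun j => hε (σ⁻¹ j))]
    rw [Equiv.prod_comp σ⁻¹ ε]
    rw [(prod_eq_one_iff_even hε).mpr (by rwa [negEntriesCard_eq hA] at hae)]

lemma extAlgMap_mapsTo {M N : Type*} [AddCommGroup M] [Module ℂ M] [AddCommGroup N]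
    [Module ℂ N] (k : ℕ) (f : M →ₗ[ℂ] N) :
    ∀ x ∈ ⋀[ℂ]^k M, ExteriorAlgebra.map f x ∈ ⋀[ℂ]^k N := by
  intro x hx
  have hle : Submodule.map (ExteriorAlgebra.map f).toLinearMap
      (LinearMap.range (ExteriorAlgebra.ι ℂ (M := M)) ^ k) ≤
      LinearMap.range (ExteriorAlgebra.ι ℂ (M := N)) ^ k := by
    rw [Submodule.map_pow, ExteriorAlgebra.ι_range_map_map]
    exact pow_le_pow_left' LinearMap.map_le_range k
  exact hle ⟨x, hx, rfl⟩

/-- The linear map induced on `k`-th exterior powers by a linear map. -/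
noncomputable def extPowMap {M N : Type*} [AddCommGroup M] [Module ℂ M] [AddCommGroup N]
    [Module ℂ N] (k : ℕ) (f : M →ₗ[ℂ] N) : ⋀[ℂ]^k M →ₗ[ℂ] ⋀[ℂ]^k N :=
  (ExteriorAlgebra.map f).toLinearMap.restrict (extAlgMap_mapsTo k f)

/-- The character of the `k`-th exterior power of a representation. -/
noncomputable def extPowChar {G M : Type*} [Group G] [AddCommGroup M] [Module ℂ M]
    (ρ : Representation ℂ G M) (k : ℕ) : G → ℂ :=
  fun g => LinearMap.trace ℂ (⋀[ℂ]^k M) (extPowMap k (ρ g))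

/-- The tautological representation of `GL_n(ℂ)` on `ℂ^n`. -/
noncomputable def glRep (n : ℕ) : Representation ℂ (GL (Fin n) ℂ) (Fin n → ℂ) where
  toFun g := Matrix.mulVecLin (g : Matrix (Fin n) (Fin n) ℂ)
  map_one' := by
    simp only [Units.val_one, Matrix.mulVecLin_one]
    rfl
  map_mul' g h := by
    simp only [Units.val_mul, Matrix.mulVecLin_mul]
    rfl

/-- The restriction of the tautological representation of `GL_n(ℂ)` to a subgroup. -/
noncomputable def subGLRep {n : ℕ} (W : Subgroup (GL (Fin n) ℂ)) :
    Representation ℂ W (Fin n → ℂ) :=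
  (glRep n).comp W.subtype


open CategoryTheory in
lemma oneDim_simple {G : Type} [Group G] (ρ : Representation ℂ G ℂ) :
    CategoryTheory.Simple (FDRep.of ρ) := by
  constructor
  intro Y f hmono
  constructor
  · intro hiso h0
    rw [h0] at hiso
    have h1 : 𝟙 (FDRep.of ρ) = inv (0 : Y ⟶ FDRep.of ρ) ≫ 0 := (IsIso.inv_hom_id _).symm
    rw [Limits.comp_zero] at h1
    have h2 := DFunLike.congr_fun (congr_arg (fun φ => φ.hom.hom.hom) h1) (1 : ℂ)
    simp only [Action.id_hom, Action.zero_hom] at h2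
    exact one_ne_zero (show (1:ℂ) = 0 from h2)
  · intro hne
    have hm : Mono ((Action.forget (FGModuleCat ℂ) (MonCat.of G)).map f) :=
      (Action.forget (FGModuleCat ℂ) (MonCat.of G)).map_mono f
    have hm' : Mono f.hom := hm
    have hinj : Function.Injective (f.hom.hom.hom : Y.V →ₗ[ℂ] ℂ) := by
      rw [← LinearMap.ker_eq_bot, Submodule.eq_bot_iff]
      intro x hx
      by_contra hxne
      have hu : (FGModuleCat.ofHom (LinearMap.toSpanSingleton ℂ Y.V x) : FGModuleCat.of ℂ ℂ ⟶ Y.V) ≫ f.hom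
          = (0 : FGModuleCat.of ℂ ℂ ⟶ Y.V) ≫ f.hom := by
        refine ConcreteCategory.hom_ext _ _ fun c => ?_
        show f.hom (c • x) = f.hom ((0 : ℂ →ₗ[ℂ] Y.V) c)
        rw [_root_.map_smul]
        rw [LinearMap.mem_ker] at hx
        simp only [zero_smul, smul_eq_zero, LinearMap.zero_apply, _root_.map_zero]
        exact Or.inr hx
      have h3 := (cancel_mono f.hom).mp hu
      have h4 : (LinearMap.toSpanSingleton ℂ Y.V x) = (0 : ℂ →ₗ[ℂ] Y.V) :=
        congr_arg (fun φ => φ.hom.hom) h3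
      have h5 := LinearMap.congr_fun h4 1
      exact hxne (by simpa using h5)
    have hh0 : (f.hom.hom.hom : Y.V →ₗ[ℂ] ℂ) ≠ 0 := by
      intro h
      exact hne (Action.hom_ext f 0 (by rw [Action.zero_hom]; ext z; exact LinearMap.congr_fun h z))
    obtain ⟨y, hy⟩ : ∃ y, (f.hom.hom.hom : Y.V →ₗ[ℂ] ℂ) y ≠ 0 := by
      by_contra h
      push_neg at h
      exact hh0 (LinearMap.ext h)
    have hsurj : Function.Surjective (f.hom.hom.hom : Y.V →ₗ[ℂ] ℂ) := by
      intro c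
      have hd : (show ℂ from f.hom y) ≠ 0 := hy
      refine ⟨((show ℂ from c) / (show ℂ from f.hom y)) • y, ?_⟩
      rw [_root_.map_smul]
      show ((show ℂ from c) / (show ℂ from f.hom y)) * (show ℂ from f.hom y) = (show ℂ from c)
      field_simp
    let E : Y.V ≃ₗ[ℂ] ℂ := LinearEquiv.ofBijective (f.hom.hom.hom : Y.V →ₗ[ℂ] ℂ) ⟨hinj, hsurj⟩
    have hfc : ∀ (g : G) (z : Y.V), f.hom.hom.hom (FDRep.ρ Y g z) = ρ g (f.hom.hom.hom z) := by
      intro g z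
      exact LinearMap.congr_fun (congr_arg (fun φ => φ.hom.hom) (f.comm g)) z
    let ginv : FDRep.of ρ ⟶ Y :=
      { hom := (FGModuleCat.ofHom E.symm.toLinearMap : FGModuleCat.of ℂ ℂ ⟶ Y.V)
        comm := by
          intro g
          refine ConcreteCategory.hom_ext _ _ fun x => ?_
          show E.symm (ρ g x) = FDRep.ρ Y g (E.symm x)
          apply hinj
          show E (E.symm _) = (f.hom.hom.hom : Y.V →ₗ[ℂ] ℂ) (FDRep.ρ Y g (E.symm x))
          rw [E.apply_symm_apply, hfc g (E.symm x)]
          rw [show ((f.hom.hom.hom : Y.V →ₗ[ℂ] ℂ) (E.symm x) : ℂ) = E (E.symm x) from rfl,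
            E.apply_symm_apply]  }
    refine ⟨⟨ginv, ?_, ?_⟩⟩
    · apply Action.hom_ext
      ext z
      show E.symm (f.hom.hom.hom z) = z
      exact E.symm_apply_apply z
    · apply Action.hom_ext
      refine ConcreteCategory.hom_ext _ _ fun x => ?_
      show f.hom.hom.hom (E.symm x) = x
      exact E.apply_symm_apply x

lemma extPowMap_comp {M N P : Type*} [AddCommGroup M] [Module ℂ M] [AddCommGroup N]
    [Module ℂ N] [AddCommGroup P] [Module ℂ P] (k : ℕ) (f : N →ₗ[ℂ] P) (g : M →ₗ[ℂ] N) :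
    extPowMap k (f ∘ₗ g) = (extPowMap k f) ∘ₗ (extPowMap k g) := by
  apply LinearMap.ext
  intro x
  apply Subtype.ext
  simp only [extPowMap, LinearMap.comp_apply, LinearMap.restrict_apply,
    AlgHom.toLinearMap_apply]
  show ExteriorAlgebra.map (f ∘ₗ g) x.1 = ExteriorAlgebra.map f (ExteriorAlgebra.map g x.1)
  rw [← ExteriorAlgebra.map_comp_map]
  rfl

lemma extPowMap_id {M : Type*} [AddCommGroup M] [Module ℂ M] (k : ℕ) :
    extPowMap k (LinearMap.id : M →ₗ[ℂ] M) = LinearMap.id := by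
  apply LinearMap.ext
  intro x
  apply Subtype.ext
  simp only [extPowMap, LinearMap.restrict_apply, AlgHom.toLinearMap_apply,
    ExteriorAlgebra.map_id, LinearMap.id_apply]
  rfl

lemma extPow_trace_conj {M : Type*} [AddCommGroup M] [Module ℂ M] (k : ℕ)
    (e : (M ≃ₗ[ℂ] M)) (f : M →ₗ[ℂ] M) :
    LinearMap.trace ℂ _ (extPowMap k ((e.toLinearMap ∘ₗ f) ∘ₗ e.symm.toLinearMap))
      = LinearMap.trace ℂ _ (extPowMap k f) := by
  have h1 : (e.toLinearMap ∘ₗ e.symm.toLinearMap) = LinearMap.id :=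
    LinearMap.ext fun x => e.apply_symm_apply x
  have h2 : (e.symm.toLinearMap ∘ₗ e.toLinearMap) = LinearMap.id :=
    LinearMap.ext fun x => e.symm_apply_apply x
  let E : (⋀[ℂ]^k M) ≃ₗ[ℂ] (⋀[ℂ]^k M) :=
    LinearEquiv.ofLinear (extPowMap k e.toLinearMap) (extPowMap k e.symm.toLinearMap)
      (by rw [← extPowMap_comp, h1, extPowMap_id])
      (by rw [← extPowMap_comp, h2, extPowMap_id])
  have h3 : extPowMap k ((e.toLinearMap ∘ₗ f) ∘ₗ e.symm.toLinearMap)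
      = E.conj (extPowMap k f) := by
    rw [LinearEquiv.conj_apply, extPowMap_comp, extPowMap_comp]
    rfl
  rw [h3, LinearMap.trace_conj']

lemma sp_unique {n : ℕ} {A : Matrix (Fin n) (Fin n) ℂ} {σ σ' : Equiv.Perm (Fin n)}
    {ε ε' : Fin n → ℂ} (hε' : ∀ j, ε' j = 1 ∨ ε' j = -1)
    (h : ∀ i j, A i j = if i = σ j then ε j else 0)
    (h' : ∀ i j, A i j = if i = σ' j then ε' j else 0) : σ' = σ := by
  apply Equiv.ext
  intro j
  by_contra hne
  have h1 := (h (σ' j) j).symm.trans (h' (σ' j) j)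
  rw [if_neg hne, if_pos rfl] at h1
  rcases hε' j with h2 | h2 <;> rw [h2] at h1 <;> norm_num at h1

lemma isSignedPerm_of_mem {n : ℕ} (g : signedPermGroup n) :
    IsSignedPerm ((g : GL (Fin n) ℂ) : Matrix (Fin n) (Fin n) ℂ) := g.2

/-- The underlying permutation of a signed permutation matrix. -/
noncomputable def permOf {n : ℕ} (g : signedPermGroup n) : Equiv.Perm (Fin n) :=
  (isSignedPerm_of_mem g).choose

lemma permOf_spec {n : ℕ} (g : signedPermGroup n) :
    ∃ ε : Fin n → ℂ, (∀ j, ε j = 1 ∨ ε j = -1) ∧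
      ∀ i j, ((g : GL (Fin n) ℂ) : Matrix (Fin n) (Fin n) ℂ) i j
        = if i = permOf g j then ε j else 0 :=
  (isSignedPerm_of_mem g).choose_spec

lemma permOf_eq {n : ℕ} (g : signedPermGroup n) {σ : Equiv.Perm (Fin n)} {ε : Fin n → ℂ}
    (h : ∀ i j, ((g : GL (Fin n) ℂ) : Matrix (Fin n) (Fin n) ℂ) i j
      = if i = σ j then ε j else 0) : permOf g = σ := by
  obtain ⟨ε', hε', h'⟩ := permOf_spec g
  exact sp_unique hε' h h'

lemma permOf_mul {n : ℕ} (a b : signedPermGroup n) :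
    permOf (a * b) = permOf a * permOf b := by
  obtain ⟨ε, hε, hA⟩ := permOf_spec a
  obtain ⟨δ, hδ, hB⟩ := permOf_spec b
  refine permOf_eq (a * b) (σ := permOf a * permOf b)
    (ε := fun j => ε (permOf b j) * δ j) ?_
  intro i j
  have hab : (((a * b : signedPermGroup n) : GL (Fin n) ℂ) : Matrix (Fin n) (Fin n) ℂ)
      = ((a : GL (Fin n) ℂ) : Matrix (Fin n) (Fin n) ℂ)
        * ((b : GL (Fin n) ℂ) : Matrix (Fin n) (Fin n) ℂ) := rfl
  rw [hab]
  exact signedPerm_mul_entries hA hB i j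

lemma permOf_one {n : ℕ} : permOf (1 : signedPermGroup n) = 1 := by
  refine permOf_eq 1 (σ := 1) (ε := fun _ => (1:ℂ)) ?_
  intro i j
  simp [Matrix.one_apply]
  exact if_congr Iff.rfl rfl rfl

/-- The sign of the underlying permutation, as a `ℂ`-valued character. -/
noncomputable def signChar {n : ℕ} (g : signedPermGroup n) : ℂ :=
  ((Equiv.Perm.sign (permOf g) : ℤ) : ℂ)

lemma signChar_one {n : ℕ} : signChar (1 : signedPermGroup n) = 1 := by
  unfold signChar
  rw [permOf_one]
  simp

lemma signChar_mul {n : ℕ} (a b : signedPermGroup n) :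
    signChar (a * b) = signChar a * signChar b := by
  unfold signChar
  rw [permOf_mul, _root_.map_mul]
  push_cast
  ring

/-- The sign-of-underlying-permutation representation of the signed permutation group. -/
noncomputable def signRep (n : ℕ) : Representation ℂ (signedPermGroup n) ℂ where
  toFun g := signChar g • LinearMap.id
  map_one' := by
    ext
    simp [signChar_one]
  map_mul' a b := by
    ext
    simp only [signChar_mul, Module.End.mul_apply, LinearMap.smul_apply, LinearMap.id_apply,
      smul_eq_mul]
    ring

lemma signRep_char {n : ℕ} (g : signedPermGroup n) :
    (FDRep.of (signRep n)).character g = signChar g := by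
  show LinearMap.trace ℂ ℂ (signChar g • LinearMap.id) = signChar g
  rw [_root_.map_smul, LinearMap.trace_id, Module.finrank_self]
  simp

/-- The signed permutation matrix attached to `(σ, ε)`. -/
def spMat {n : ℕ} (σ : Equiv.Perm (Fin n)) (ε : Fin n → ℂ) : Matrix (Fin n) (Fin n) ℂ :=
  Matrix.of fun i j => if i = σ j then ε j else 0

lemma spMat_entries {n : ℕ} (σ : Equiv.Perm (Fin n)) (ε : Fin n → ℂ) :
    ∀ i j, spMat σ ε i j = if i = σ j then ε j else 0 := fun _ _ => rfl

lemma spMat_mul {n : ℕ} (σ τ : Equiv.Perm (Fin n)) (ε δ : Fin n → ℂ) :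
    spMat σ ε * spMat τ δ = spMat (σ * τ) (fun j => ε (τ j) * δ j) := by
  ext i j
  exact signedPerm_mul_entries (spMat_entries σ ε) (spMat_entries τ δ) i j

lemma spMat_mul_inv {n : ℕ} (σ : Equiv.Perm (Fin n)) (ε : Fin n → ℂ)
    (hε : ∀ j, ε j = 1 ∨ ε j = -1) :
    spMat σ ε * spMat σ⁻¹ (fun j => ε (σ⁻¹ j)) = 1 := by
  rw [spMat_mul]
  ext i j
  rw [spMat_entries, Matrix.one_apply]
  have hσ : (σ * σ⁻¹) j = j := by simp
  rw [hσ]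
  rcases hε (σ⁻¹ j) with h | h <;> rw [h] <;> split_ifs <;> norm_num

lemma spMat_inv_mul {n : ℕ} (σ : Equiv.Perm (Fin n)) (ε : Fin n → ℂ)
    (hε : ∀ j, ε j = 1 ∨ ε j = -1) :
    spMat σ⁻¹ (fun j => ε (σ⁻¹ j)) * spMat σ ε = 1 := by
  rw [spMat_mul]
  ext i j
  rw [spMat_entries, Matrix.one_apply]
  have hσ : (σ⁻¹ * σ) j = j := by simp
  have hσ2 : σ⁻¹ (σ j) = j := by simp
  rw [hσ, hσ2]
  rcases hε j with h | h <;> rw [h] <;> split_ifs <;> norm_num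

/-- The signed permutation matrix attached to `(σ, ε)` as an element of `GL_n(ℂ)`. -/
noncomputable def spUnit {n : ℕ} (σ : Equiv.Perm (Fin n)) (ε : Fin n → ℂ)
    (hε : ∀ j, ε j = 1 ∨ ε j = -1) : GL (Fin n) ℂ :=
  ⟨spMat σ ε, spMat σ⁻¹ (fun j => ε (σ⁻¹ j)), spMat_mul_inv σ ε hε, spMat_inv_mul σ ε hε⟩

/-- The signed permutation matrix attached to `(σ, ε)` as an element of the group
of signed permutation matrices. -/
noncomputable def spElem {n : ℕ} (σ : Equiv.Perm (Fin n)) (ε : Fin n → ℂ)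
    (hε : ∀ j, ε j = 1 ∨ ε j = -1) : signedPermGroup n :=
  ⟨spUnit σ ε hε, ⟨σ, ε, hε, fun _ _ => rfl⟩⟩

lemma permOf_spElem {n : ℕ} (σ : Equiv.Perm (Fin n)) (ε : Fin n → ℂ)
    (hε : ∀ j, ε j = 1 ∨ ε j = -1) : permOf (spElem σ ε hε) = σ :=
  permOf_eq _ (σ := σ) (ε := ε) (fun _ _ => rfl)

lemma spMat_mulVec {n : ℕ} (σ : Equiv.Perm (Fin n)) (ε : Fin n → ℂ) (x : Fin n → ℂ)
    (i : Fin n) : Matrix.mulVecLin (spMat σ ε) x i = ε (σ⁻¹ i) * x (σ⁻¹ i) := by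
  rw [Matrix.mulVecLin_apply]
  show ∑ j, (if i = σ j then ε j else 0) * x j = _
  rw [Finset.sum_eq_single (σ⁻¹ i)]
  · rw [if_pos (show i = σ (σ⁻¹ i) from (Equiv.apply_symm_apply σ i).symm)]
  · intro k _ hk
    rw [if_neg, zero_mul]
    intro he
    exact hk (by simp [he])
  · simp

/-- One leg of the change-of-basis equivalence. -/
noncomputable def eMap {n : ℕ} (a b c : Fin n) : (Fin n → ℂ) →ₗ[ℂ] (Fin n → ℂ) where
  toFun x := fun i => if i = a then x a + x c else if i = b then x a - x c
    else if i = c then x b else x i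
  map_add' x y := by
    funext i
    simp only [Pi.add_apply]
    split_ifs <;> ring
  map_smul' t x := by
    funext i
    simp only [Pi.smul_apply, RingHom.id_apply, smul_eq_mul]
    split_ifs <;> ring

/-- The other leg of the change-of-basis equivalence. -/
noncomputable def eInv {n : ℕ} (a b c : Fin n) : (Fin n → ℂ) →ₗ[ℂ] (Fin n → ℂ) where
  toFun y := fun j => if j = a then (y a + y b)/2 else if j = b then y c
    else if j = c then (y a - y b)/2 else y j
  map_add' x y := by
    funext i
    simp only [Pi.add_apply]
    split_ifs <;> ring
  map_smul' t x := by
    funext i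
    simp only [Pi.smul_apply, RingHom.id_apply, smul_eq_mul]
    split_ifs <;> ring

lemma eMap_apply {n : ℕ} (a b c : Fin n) (x : Fin n → ℂ) (i : Fin n) :
    eMap a b c x i = if i = a then x a + x c else if i = b then x a - x c
      else if i = c then x b else x i := rfl

lemma eInv_apply {n : ℕ} (a b c : Fin n) (y : Fin n → ℂ) (j : Fin n) :
    eInv a b c y j = if j = a then (y a + y b)/2 else if j = b then y c
      else if j = c then (y a - y b)/2 else y j := rfl

lemma eMap_eInv {n : ℕ} (a b c : Fin n) (hab : a ≠ b) (hac : a ≠ c) (hbc : b ≠ c) :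
    (eMap a b c) ∘ₗ (eInv a b c) = LinearMap.id := by
  apply LinearMap.ext
  intro y
  funext i
  simp only [LinearMap.comp_apply, LinearMap.id_apply, eMap_apply, eInv_apply]
  by_cases hia : i = a
  · subst hia
    simp [hab, hac, Ne.symm hab, Ne.symm hac, hbc, Ne.symm hbc]
    all_goals ring
  · by_cases hib : i = b
    · subst hib
      simp [hab, hac, Ne.symm hab, Ne.symm hac, hbc, Ne.symm hbc]
      ring
    · by_cases hic : i = c
      · subst hic
        simp [hab, hac, Ne.symm hab, Ne.symm hac, hbc, Ne.symm hbc]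
      · simp [hia, hib, hic]

lemma eInv_eMap {n : ℕ} (a b c : Fin n) (hab : a ≠ b) (hac : a ≠ c) (hbc : b ≠ c) :
    (eInv a b c) ∘ₗ (eMap a b c) = LinearMap.id := by
  apply LinearMap.ext
  intro x
  funext i
  simp only [LinearMap.comp_apply, LinearMap.id_apply, eMap_apply, eInv_apply]
  by_cases hia : i = a
  · subst hia
    simp [hab, hac, Ne.symm hab, Ne.symm hac, hbc, Ne.symm hbc]
    all_goals ring
  · by_cases hib : i = b
    · subst hib
      simp [hab, hac, Ne.symm hab, Ne.symm hac, hbc, Ne.symm hbc]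
    · by_cases hic : i = c
      · subst hic
        simp [hab, hac, Ne.symm hab, Ne.symm hac, hbc, Ne.symm hbc]
        all_goals ring
      · simp [hia, hib, hic]

/-- The change-of-basis equivalence conjugating the two chosen group elements. -/
noncomputable def eEquiv {n : ℕ} (a b c : Fin n) (hab : a ≠ b) (hac : a ≠ c)
    (hbc : b ≠ c) : (Fin n → ℂ) ≃ₗ[ℂ] (Fin n → ℂ) :=
  LinearEquiv.ofLinear (eMap a b c) (eInv a b c)
    (eMap_eInv a b c hab hac hbc) (eInv_eMap a b c hab hac hbc)

/-- Signs for the first chosen element. -/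
def eps1 {n : ℕ} (c : Fin n) : Fin n → ℂ := fun j => if j = c then -1 else 1

/-- Signs for the second chosen element. -/
def eps2 {n : ℕ} (b c : Fin n) : Fin n → ℂ := fun j => if j = b ∨ j = c then -1 else 1

lemma eps1_pm {n : ℕ} (c : Fin n) : ∀ j, eps1 c j = 1 ∨ eps1 c j = -1 := by
  intro j
  unfold eps1
  split_ifs <;> simp

lemma eps2_pm {n : ℕ} (b c : Fin n) : ∀ j, eps2 b c j = 1 ∨ eps2 b c j = -1 := by
  intro j
  unfold eps2
  split_ifs <;> simp

lemma key_intertwine {n : ℕ} (a b c : Fin n) (hab : a ≠ b) (hac : a ≠ c) (hbc : b ≠ c) :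
    (eMap a b c) ∘ₗ Matrix.mulVecLin (spMat 1 (eps2 b c))
      = Matrix.mulVecLin (spMat (Equiv.swap a b) (eps1 c)) ∘ₗ (eMap a b c) := by
  apply LinearMap.ext
  intro x
  funext i
  simp only [LinearMap.comp_apply]
  have hL2 : Matrix.mulVecLin (spMat 1 (eps2 b c)) x = fun j => eps2 b c j * x j := by
    funext j
    rw [spMat_mulVec]
    simp
  rw [hL2, spMat_mulVec, Equiv.swap_inv]
  by_cases hia : i = a
  · subst hia
    rw [Equiv.swap_apply_left]
    simp only [eMap_apply, eps1, eps2]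
    simp [hab, hac, hbc, Ne.symm hab, Ne.symm hac, Ne.symm hbc]
    all_goals ring
  · by_cases hib : i = b
    · subst hib
      rw [Equiv.swap_apply_right]
      simp only [eMap_apply, eps1, eps2]
      simp [hab, hac, hbc, Ne.symm hab, Ne.symm hac, Ne.symm hbc]
      all_goals ring
    · by_cases hic : i = c
      · subst hic
        rw [Equiv.swap_apply_of_ne_of_ne (Ne.symm hac) (Ne.symm hbc)]
        simp only [eMap_apply, eps1, eps2]
        simp [hab, hac, hbc, Ne.symm hab, Ne.symm hac, Ne.symm hbc]
        all_goals ring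
      · rw [Equiv.swap_apply_of_ne_of_ne hia hib]
        simp only [eMap_apply, eps1, eps2]
        simp [hia, hib, hic]
        all_goals ring

lemma key_conj {n : ℕ} (a b c : Fin n) (hab : a ≠ b) (hac : a ≠ c) (hbc : b ≠ c) :
    Matrix.mulVecLin (spMat (Equiv.swap a b) (eps1 c))
      = ((eEquiv a b c hab hac hbc).toLinearMap ∘ₗ Matrix.mulVecLin (spMat 1 (eps2 b c)))
          ∘ₗ (eEquiv a b c hab hac hbc).symm.toLinearMap := by
  have he : (eEquiv a b c hab hac hbc).toLinearMap = eMap a b c := rfl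
  have he' : (eEquiv a b c hab hac hbc).symm.toLinearMap = eInv a b c := rfl
  rw [he, he', key_intertwine a b c hab hac hbc, LinearMap.comp_assoc,
    eMap_eInv a b c hab hac hbc, LinearMap.comp_id]

/-- For `n ≥ 4` and `W ⊂ GL_n(ℂ)` the Coxeter group of type `B_n` of all
signed permutation matrices, the subring of class functions generated by the characters of
the exterior powers `Λ^k ℂ^n`, `0 ≤ k ≤ n`, of the natural reflection representation is a
proper subring of `R(W)`: some irreducible character of `W` does not belong to it. -/
theorem typeB_extPowers_do_not_generate (n : ℕ) (hn : 4 ≤ n) :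
    ∃ φ : FDRep ℂ (signedPermGroup n), CategoryTheory.Simple φ ∧
      φ.character ∉ Subring.closure
        {f : signedPermGroup n → ℂ | ∃ k ≤ n, f = extPowChar (subGLRep (signedPermGroup n)) k} := by
  classical
  have h0 : (0:ℕ) < n := by omega
  have h1 : (1:ℕ) < n := by omega
  have h2 : (2:ℕ) < n := by omega
  set a : Fin n := ⟨0, h0⟩ with ha
  set b : Fin n := ⟨1, h1⟩ with hb
  set c : Fin n := ⟨2, h2⟩ with hc
  have hab : a ≠ b := Fin.ne_of_val_ne (by norm_num)
  have hac : a ≠ c := Fin.ne_of_val_ne (by norm_num)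
  have hbc : b ≠ c := Fin.ne_of_val_ne (by norm_num)
  refine ⟨FDRep.of (signRep n), oneDim_simple _, ?_⟩
  intro hmem
  set g1 : signedPermGroup n := spElem (Equiv.swap a b) (eps1 c) (eps1_pm c) with hg1
  set g2 : signedPermGroup n := spElem 1 (eps2 b c) (eps2_pm b c) with hg2
  have hle : Subring.closure
      {f : signedPermGroup n → ℂ | ∃ k ≤ n, f = extPowChar (subGLRep (signedPermGroup n)) k}
      ≤ RingHom.eqLocus (Pi.evalRingHom (fun _ : signedPermGroup n => ℂ) g1)
        (Pi.evalRingHom (fun _ : signedPermGroup n => ℂ) g2) := by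
    apply Subring.closure_le.mpr
    rintro f ⟨k, hk, rfl⟩
    show extPowChar (subGLRep (signedPermGroup n)) k g1
      = extPowChar (subGLRep (signedPermGroup n)) k g2
    unfold extPowChar
    have e1 : (subGLRep (signedPermGroup n)) g1
        = Matrix.mulVecLin (spMat (Equiv.swap a b) (eps1 c)) := rfl
    have e2 : (subGLRep (signedPermGroup n)) g2
        = Matrix.mulVecLin (spMat 1 (eps2 b c)) := rfl
    rw [e1, e2, key_conj a b c hab hac hbc, extPow_trace_conj]
  have heq : (FDRep.of (signRep n)).character g1 = (FDRep.of (signRep n)).character g2 :=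
    hle hmem
  rw [signRep_char, signRep_char] at heq
  have hs1 : signChar g1 = -1 := by
    unfold signChar
    rw [hg1, permOf_spElem, Equiv.Perm.sign_swap hab]
    simp
  have hs2 : signChar g2 = 1 := by
    unfold signChar
    rw [hg2, permOf_spElem]
    simp
  rw [hs1, hs2] at heq
  norm_num at heq
end
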